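/- arXiv:cs/0605100 — 4 statements merged into one kernel-verified Lean document; each statement's English description precedes it below -/
import Mathlib

section
/- Let ε > 0 and δ ∈ (0,1) be given, and assume there exists θ_min ∈ (0, 1/|S|) such that A'_{i,j} ≥ θ_min and π'_i ≥ θ_min for all states i, j, and that the maximization defining θ̂ = (Â, π̂) is restricted to parameters whose entries are all at least θ_min. If, for each observation m = 1,…,T, the number of importance samples used is L_m = (2 T² N_m⁴ b_m² |log θ_min|² / ε²) · log( 2 N_m² / (1 − (1−δ)^{1/T}) ), then Δ̂(θ̂) − Δ(θ̂) < ε with probability greater than 1 − δ. -/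
open Finset MeasureTheory ProbabilityTheory

namespace NICO

variable {S : Type*} [Fintype S]

/-- Ordered-path likelihood `P[y|τ,A,π] = π_{y_{τ₁}} ∏_{t=2}^N A_{y_{τ_{t−1}}, y_{τ_t}}`. -/
noncomputable def lik (A : S → S → ℝ) (π : S → ℝ) {N : ℕ} (y : Fin N → S)
    (τ : Equiv.Perm (Fin N)) : ℝ :=
  ∏ i : Fin N,
    if i.val = 0 then π (y (τ i))
    else A (y (τ ⟨i.val - 1, Nat.lt_of_le_of_lt (Nat.sub_le i.val 1) i.isLt⟩)) (y (τ i))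

/-- Posterior over permutations under a uniform prior. -/
noncomputable def post (A : S → S → ℝ) (π : S → ℝ) {N : ℕ} (y : Fin N → S)
    (τ : Equiv.Perm (Fin N)) : ℝ :=
  lik A π y τ / ∑ σ : Equiv.Perm (Fin N), lik A π y σ

/-- Indicator of the event `τ₁ = t'`. -/
def rstat {N : ℕ} (hN : 0 < N) (t' : Fin N) (τ : Equiv.Perm (Fin N)) : ℝ :=
  if τ ⟨0, hN⟩ = t' then 1 else 0

/-- The number of indices `t ≥ 2` with `τ_t = t'` and `τ_{t−1} = t''`. -/
def astat {N : ℕ} (t' t'' : Fin N) (τ : Equiv.Perm (Fin N)) : ℝ :=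
  ∑ t : Fin N,
    if 0 < t.val ∧ τ t = t' ∧
        τ ⟨t.val - 1, Nat.lt_of_le_of_lt (Nat.sub_le t.val 1) t.isLt⟩ = t''
    then 1 else 0

/-- Exact E-step statistic `r̄_{1,t'} = P[τ₁ = t' | y, A, π]`. -/
noncomputable def rbar (A : S → S → ℝ) (π : S → ℝ) {N : ℕ} (hN : 0 < N)
    (y : Fin N → S) (t' : Fin N) : ℝ :=
  ∑ τ : Equiv.Perm (Fin N), post A π y τ * rstat hN t' τ

/-- Exact E-step statistic `ᾱ_{t',t''}`. -/
noncomputable def abar (A : S → S → ℝ) (π : S → ℝ) {N : ℕ}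
    (y : Fin N → S) (t' t'' : Fin N) : ℝ :=
  ∑ τ : Equiv.Perm (Fin N), post A π y τ * astat t' t'' τ

/-- Self-normalized importance-sampling estimate from `L` samples with
weight function `z` and statistic `f`. -/
noncomputable def isAvg {N : ℕ} (z f : Equiv.Perm (Fin N) → ℝ) (L : ℕ)
    (s : ℕ → Equiv.Perm (Fin N)) : ℝ :=
  (∑ i ∈ Finset.range L, z (s i) * f (s i)) / ∑ i ∈ Finset.range L, z (s i)

/-- `A` is a row-stochastic matrix. -/
def rowStochastic (A : S → S → ℝ) : Prop :=
  (∀ i j, 0 ≤ A i j) ∧ ∀ i, ∑ j, A i j = 1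

/-- `π` is a probability vector. -/
def probVec (π : S → ℝ) : Prop :=
  (∀ i, 0 ≤ π i) ∧ ∑ i, π i = 1

/-- The EM auxiliary function built from statistic families `α` and `r`:
`∑ₘ [∑_{t',t''} α i j log A_{y_{t''},y_{t'}} + ∑_{t'} r_{t'} log π_{y_{t'}}]`. -/
noncomputable def Qaux {T : ℕ} {N : Fin T → ℕ} (y : ∀ m, Fin (N m) → S)
    (α : ∀ m, Fin (N m) → Fin (N m) → ℝ) (r : ∀ m, Fin (N m) → ℝ)
    (A : S → S → ℝ) (π : S → ℝ) : ℝ :=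
  ∑ m, ((∑ t', ∑ t'', α m t' t'' * Real.log (A (y m t'') (y m t'))) +
    ∑ t', r m t' * Real.log (π (y m t')))

/-- The exact EM auxiliary function `Q(A,π;A',π')`. -/
noncomputable def Qexact {T : ℕ} {N : Fin T → ℕ} (hN : ∀ m, 0 < N m)
    (y : ∀ m, Fin (N m) → S) (A' : S → S → ℝ) (π' : S → ℝ)
    (A : S → S → ℝ) (π : S → ℝ) : ℝ :=
  Qaux y (fun m => abar A' π' (y m)) (fun m => rbar A' π' (hN m) (y m)) A π

/-- The Monte Carlo EM auxiliary function `Q̂(A,π;A',π')` built from the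
importance samples `samp`. -/
noncomputable def Qhat {T : ℕ} {N : Fin T → ℕ} (hN : ∀ m, 0 < N m)
    (y : ∀ m, Fin (N m) → S) (A' : S → S → ℝ) (π' : S → ℝ)
    (R : ∀ m, Equiv.Perm (Fin (N m)) → ℝ) (L : Fin T → ℕ)
    (samp : ∀ m, ℕ → Equiv.Perm (Fin (N m)))
    (A : S → S → ℝ) (π : S → ℝ) : ℝ :=
  Qaux y
    (fun m t' t'' =>
      isAvg (fun σ => post A' π' (y m) σ / R m σ) (astat t' t'') (L m) (samp m))
    (fun m t' =>
      isAvg (fun σ => post A' π' (y m) σ / R m σ) (rstat (hN m) t') (L m) (samp m))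
    A π


set_option maxHeartbeats 2000000
attribute [local instance] Classical.propDecidable

lemma hoeffding_phi {lam : ℝ} (h0 : 0 ≤ lam) (h1 : lam ≤ 1) :
    ∀ h : ℝ, 0 ≤ h → -lam * h + Real.log (1 - lam + lam * Real.exp h) ≤ h ^ 2 / 8 := by
  have hD : ∀ x : ℝ, 0 < 1 - lam + lam * Real.exp x := by
    intro x
    rcases eq_or_lt_of_le h0 with h | h
    · simp [← h]
    · nlinarith [Real.exp_pos x]
  set φ : ℝ → ℝ := fun x => -lam * x + Real.log (1 - lam + lam * Real.exp x) with hφ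
  set g : ℝ → ℝ := fun x => -lam + lam * Real.exp x / (1 - lam + lam * Real.exp x) with hg
  have hder : ∀ x : ℝ, HasDerivAt (fun y => 1 - lam + lam * Real.exp y) (lam * Real.exp x) x := by
    intro x
    simpa using ((Real.hasDerivAt_exp x).const_mul lam).const_add (1 - lam)
  have hderivφ : ∀ x, HasDerivAt φ (g x) x := by
    intro x
    have hlog := (hder x).log (ne_of_gt (hD x))
    have hlin : HasDerivAt (fun y : ℝ => -lam * y) (-lam) x := by
      simpa using (hasDerivAt_id x).const_mul (-lam)
    exact hlin.add hlog
  have hderivg : ∀ x, HasDerivAt g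
      ((lam * Real.exp x * (1 - lam + lam * Real.exp x) -
        lam * Real.exp x * (lam * Real.exp x)) / (1 - lam + lam * Real.exp x) ^ 2) x := by
    intro x
    have hu : HasDerivAt (fun y => lam * Real.exp y) (lam * Real.exp x) x :=
      (Real.hasDerivAt_exp x).const_mul lam
    have := (hu.div (hder x) (ne_of_gt (hD x))).const_add (-lam)
    simpa [hg] using this
  have hg'le : ∀ x : ℝ,
      (lam * Real.exp x * (1 - lam + lam * Real.exp x) -
        lam * Real.exp x * (lam * Real.exp x)) / (1 - lam + lam * Real.exp x) ^ 2 ≤ 1 / 4 := by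
    intro x
    rw [div_le_iff₀ (pow_pos (hD x) 2)]
    nlinarith [sq_nonneg (1 - lam - lam * Real.exp x), Real.exp_pos x]
  -- F x = x/4 - g x is monotone
  have hF : ∀ x y : ℝ, x ≤ y → x / 4 - g x ≤ y / 4 - g y := by
    have hdF : ∀ x : ℝ, HasDerivAt (fun y => y / 4 - g y)
        (1 / 4 - ((lam * Real.exp x * (1 - lam + lam * Real.exp x) -
          lam * Real.exp x * (lam * Real.exp x)) / (1 - lam + lam * Real.exp x) ^ 2)) x := by
      intro x
      exact ((hasDerivAt_id x).div_const 4).sub (hderivg x)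
    have hmono : Monotone (fun y : ℝ => y / 4 - g y) := by
      apply monotone_of_deriv_nonneg
      · exact fun x => (hdF x).differentiableAt
      · intro x
        rw [(hdF x).deriv]
        linarith [hg'le x]
    exact fun x y h => hmono h
  have hg0 : g 0 = 0 := by simp [hg]
  have hgle : ∀ x : ℝ, 0 ≤ x → g x ≤ x / 4 := by
    intro x hx
    have := hF 0 x hx
    rw [hg0] at this
    linarith
  -- G x = x^2/8 - φ x is monotone on [0, ∞)
  intro h hh
  have hdG : ∀ x : ℝ, HasDerivAt (fun y => y ^ 2 / 8 - φ y) (2 * x / 8 - g x) x := by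
    intro x
    have : HasDerivAt (fun y : ℝ => y ^ 2 / 8) (2 * x / 8) x := by
      simpa using ((hasDerivAt_pow 2 x).div_const 8)
    exact this.sub (hderivφ x)
  have hmonoG : MonotoneOn (fun y : ℝ => y ^ 2 / 8 - φ y) (Set.Ici (0 : ℝ)) := by
    apply monotoneOn_of_deriv_nonneg (convex_Ici 0)
    · exact (Continuous.continuousOn (by
        have : ∀ x : ℝ, DifferentiableAt ℝ (fun y : ℝ => y ^ 2 / 8 - φ y) x :=
          fun x => (hdG x).differentiableAt
        exact Differentiable.continuous this))
    · intro x _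
      exact (hdG x).differentiableAt.differentiableWithinAt
    · intro x hx
      rw [interior_Ici] at hx
      rw [(hdG x).deriv]
      have := hgle x (le_of_lt hx)
      linarith
  have hG0 : (fun y : ℝ => y ^ 2 / 8 - φ y) 0 = 0 := by simp [hφ]
  have := hmonoG (Set.self_mem_Ici) (Set.mem_Ici.mpr hh) hh
  rw [hG0] at this
  simpa [hφ] using by linarith [this]


lemma hoeffding_lemma_finite {ι : Type*} [Fintype ι] {p X : ι → ℝ} (hp : ∀ i, 0 ≤ p i)
    (hp1 : ∑ i, p i = 1) (hX : ∑ i, p i * X i = 0) {A B : ℝ}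
    (hA : ∀ i, A ≤ X i) (hB : ∀ i, X i ≤ B) :
    ∑ i, p i * Real.exp (X i) ≤ Real.exp ((B - A) ^ 2 / 8) := by
  have hA0 : A ≤ 0 := by
    have h1' : ∑ i, p i * A ≤ ∑ i, p i * X i :=
      Finset.sum_le_sum fun i _ => mul_le_mul_of_nonneg_left (hA i) (hp i)
    rw [hX, ← Finset.sum_mul, hp1, one_mul] at h1'
    exact h1'
  have hB0 : 0 ≤ B := by
    have h1' : ∑ i, p i * X i ≤ ∑ i, p i * B :=
      Finset.sum_le_sum fun i _ => mul_le_mul_of_nonneg_left (hB i) (hp i)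
    rw [hX, ← Finset.sum_mul, hp1, one_mul] at h1'
    exact h1'
  rcases lt_or_ge A B with hAB | hAB
  · have hh : (0:ℝ) < B - A := by linarith
    set eA := Real.exp A with heA
    set eB := Real.exp B with heB
    have chord : ∀ i, Real.exp (X i) ≤ ((B - X i) * eA + (X i - A) * eB) / (B - A) := by
      intro i
      have ha : (0:ℝ) ≤ (B - X i) / (B - A) := div_nonneg (by linarith [hB i]) hh.le
      have hb : (0:ℝ) ≤ (X i - A) / (B - A) := div_nonneg (by linarith [hA i]) hh.le
      have hab : (B - X i) / (B - A) + (X i - A) / (B - A) = 1 := by field_simp; ring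
      have hc := convexOn_exp.2 (Set.mem_univ A) (Set.mem_univ B) ha hb hab
      have harg : ((B - X i) / (B - A)) • A + ((X i - A) / (B - A)) • B = X i := by
        simp only [smul_eq_mul]
        field_simp
        ring
      rw [harg] at hc
      calc Real.exp (X i) ≤ ((B - X i) / (B - A)) • eA + ((X i - A) / (B - A)) • eB := hc
        _ = ((B - X i) * eA + (X i - A) * eB) / (B - A) := by
            simp only [smul_eq_mul]
            field_simp
    have hsum : ∑ i, p i * (((B - X i) * eA + (X i - A) * eB) / (B - A))
        = (B * eA - A * eB) / (B - A) := by
      simp only [← mul_div_assoc]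
      rw [← Finset.sum_div]
      congr 1
      calc ∑ i, p i * ((B - X i) * eA + (X i - A) * eB)
          = ∑ i, ((B * eA - A * eB) * p i + (eB - eA) * (p i * X i)) := by
            apply Finset.sum_congr rfl; intros; ring
        _ = (B * eA - A * eB) * (∑ i, p i) + (eB - eA) * (∑ i, p i * X i) := by
            rw [Finset.sum_add_distrib, ← Finset.mul_sum, ← Finset.mul_sum]
        _ = B * eA - A * eB := by rw [hp1, hX]; ring
    have step1 : ∑ i, p i * Real.exp (X i) ≤ (B * eA - A * eB) / (B - A) := by
      rw [← hsum]
      exact Finset.sum_le_sum fun i _ => mul_le_mul_of_nonneg_left (chord i) (hp i)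
    set lam := -A / (B - A) with hlam
    have hlam0 : 0 ≤ lam := div_nonneg (by linarith) hh.le
    have hlam1 : lam ≤ 1 := by
      rw [hlam, div_le_one hh]
      linarith
    have hP : 0 < 1 - lam + lam * Real.exp (B - A) := by
      rcases eq_or_lt_of_le hlam0 with h | h
      · simp [← h]
      · nlinarith [Real.exp_pos (B - A)]
    have hEB : eA * Real.exp (B - A) = eB := by
      rw [heA, heB, ← Real.exp_add]; congr 1; ring
    have h1' : -lam * (B - A) = A := by
      rw [hlam]; field_simp
    have key : (B * eA - A * eB) / (B - A)
        = Real.exp (-lam * (B - A) + Real.log (1 - lam + lam * Real.exp (B - A))) := by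
      rw [Real.exp_add, Real.exp_log hP, h1', ← heA]
      have expand : eA * (1 - lam + lam * Real.exp (B - A))
          = eA + lam * (eA * Real.exp (B - A)) - lam * eA := by ring
      rw [expand, hEB, hlam]
      field_simp
      ring
    have final := hoeffding_phi hlam0 hlam1 (B - A) hh.le
    calc ∑ i, p i * Real.exp (X i) ≤ (B * eA - A * eB) / (B - A) := step1
      _ = Real.exp (-lam * (B - A) + Real.log (1 - lam + lam * Real.exp (B - A))) := key
      _ ≤ Real.exp ((B - A) ^ 2 / 8) := Real.exp_le_exp.mpr final
  · have hX0 : ∀ i, X i = 0 := fun i =>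
      le_antisymm (le_trans (hB i) (by linarith)) (le_trans (by linarith) (hA i))
    have : ∑ i, p i * Real.exp (X i) = 1 := by
      rw [← hp1]; apply Finset.sum_congr rfl; intro i _; rw [hX0 i]; simp
    rw [this, show (1:ℝ) = Real.exp 0 from (Real.exp_zero).symm]
    exact Real.exp_le_exp.mpr (by positivity)

/-- One-sided combinatorial Chernoff–Hoeffding bound. -/
lemma chernoff_bound {κ : Type*} [Fintype κ] {Rw : κ → ℝ} (hR : ∀ σ, 0 ≤ Rw σ)
    (hR1 : ∑ σ, Rw σ = 1) (V : κ → ℝ) {t bw : ℝ} (ht : 0 < t) (hbw : 0 < bw)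
    (hmean : ∑ σ, Rw σ * V σ = -t) {A B : ℝ}
    (hA : ∀ σ, A ≤ V σ) (hB : ∀ σ, V σ ≤ B) (hwidth : B - A ≤ bw) (L : ℕ) :
    ∑ v : Fin L → κ, (∏ i, Rw (v i)) * (if 0 ≤ ∑ i, V (v i) then (1:ℝ) else 0)
      ≤ Real.exp (-(2 * L * t ^ 2 / bw ^ 2)) := by
  have hne : Nonempty κ := by
    by_contra h
    rw [not_nonempty_iff] at h
    rw [Finset.univ_eq_empty, Finset.sum_empty] at hR1
    exact one_ne_zero hR1.symm
  have hABle : A ≤ B := le_trans (hA (Classical.arbitrary κ)) (hB (Classical.arbitrary κ))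
  set s : ℝ := 4 * t / bw ^ 2 with hs
  have hs0 : 0 ≤ s := by positivity
  have single : ∑ σ, Rw σ * Real.exp (s * V σ) ≤ Real.exp (-(2 * t ^ 2 / bw ^ 2)) := by
    have hcent : ∑ σ, Rw σ * (s * (V σ + t)) = 0 := by
      calc ∑ σ, Rw σ * (s * (V σ + t))
          = ∑ σ, (s * (Rw σ * V σ) + (s * t) * Rw σ) := by
            apply Finset.sum_congr rfl; intros; ring
        _ = s * (∑ σ, Rw σ * V σ) + (s * t) * (∑ σ, Rw σ) := by
            rw [Finset.sum_add_distrib, ← Finset.mul_sum, ← Finset.mul_sum]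
        _ = 0 := by rw [hmean, hR1]; ring
    have hhl := hoeffding_lemma_finite hR hR1 hcent
      (A := s * (A + t)) (B := s * (B + t))
      (fun σ => by have := hA σ; nlinarith) (fun σ => by have := hB σ; nlinarith)
    have hexp : ∑ σ, Rw σ * Real.exp (s * V σ)
        = Real.exp (-(s * t)) * ∑ σ, Rw σ * Real.exp (s * (V σ + t)) := by
      rw [Finset.mul_sum]
      apply Finset.sum_congr rfl
      intro σ _
      rw [← mul_assoc, mul_comm (Real.exp _) (Rw σ), mul_assoc, ← Real.exp_add]
      congr 2
      ring
    rw [hexp]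
    calc Real.exp (-(s * t)) * ∑ σ, Rw σ * Real.exp (s * (V σ + t))
        ≤ Real.exp (-(s * t)) * Real.exp ((s * (B + t) - s * (A + t)) ^ 2 / 8) :=
          mul_le_mul_of_nonneg_left hhl (Real.exp_pos _).le
      _ = Real.exp (-(s * t) + (s * (B - A)) ^ 2 / 8) := by
          rw [← Real.exp_add]; congr 2; ring
      _ ≤ Real.exp (-(2 * t ^ 2 / bw ^ 2)) := by
          apply Real.exp_le_exp.mpr
          have h2 : (s * (B - A)) ^ 2 ≤ (s * bw) ^ 2 := by
            apply pow_le_pow_left₀ (mul_nonneg hs0 (by linarith)) ?_ 2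
            exact mul_le_mul_of_nonneg_left hwidth hs0
          have h3 : -(s * t) + (s * bw) ^ 2 / 8 = -(2 * t ^ 2 / bw ^ 2) := by
            rw [hs]; field_simp; ring
          linarith
  have hmono : ∀ v : Fin L → κ,
      (∏ i, Rw (v i)) * (if 0 ≤ ∑ i, V (v i) then (1:ℝ) else 0)
        ≤ ∏ i, (Rw (v i) * Real.exp (s * V (v i))) := by
    intro v
    have hprodR : (0:ℝ) ≤ ∏ i, Rw (v i) := Finset.prod_nonneg fun i _ => hR (v i)
    split_ifs with hcond
    · rw [mul_one]
      have hid : (∏ i, Rw (v i)) * Real.exp (s * ∑ i, V (v i))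
          = ∏ i, (Rw (v i) * Real.exp (s * V (v i))) := by
        rw [Finset.mul_sum, Real.exp_sum, ← Finset.prod_mul_distrib]
      rw [← hid]
      nlinarith [Real.one_le_exp (mul_nonneg hs0 hcond), hprodR]
    · rw [mul_zero]
      exact Finset.prod_nonneg fun i _ => mul_nonneg (hR (v i)) (Real.exp_pos _).le
  calc ∑ v : Fin L → κ, (∏ i, Rw (v i)) * (if 0 ≤ ∑ i, V (v i) then (1:ℝ) else 0)
      ≤ ∑ v : Fin L → κ, ∏ i, (Rw (v i) * Real.exp (s * V (v i))) :=
        Finset.sum_le_sum fun v _ => hmono v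
    _ = (∑ σ, Rw σ * Real.exp (s * V σ)) ^ L := by
        rw [← Fintype.prod_sum (fun (_ : Fin L) (σ : κ) => Rw σ * Real.exp (s * V σ))]
        rw [Finset.prod_const, Finset.card_univ, Fintype.card_fin]
    _ ≤ (Real.exp (-(2 * t ^ 2 / bw ^ 2))) ^ L := by
        apply pow_le_pow_left₀ ?_ single L
        exact Finset.sum_nonneg fun σ _ => mul_nonneg (hR σ) (Real.exp_pos _).le
    _ = Real.exp (-(2 * L * t ^ 2 / bw ^ 2)) := by
        rw [← Real.exp_nat_mul]
        congr 1
        ring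


noncomputable def isAvgVec {κ : Type*} (z f : κ → ℝ) {L : ℕ} (v : Fin L → κ) : ℝ :=
  (∑ i, z (v i) * f (v i)) / (∑ i, z (v i))

lemma isAvgVec_nonneg {κ : Type*} {z f : κ → ℝ} (hz : ∀ σ, 0 ≤ z σ) (hf : ∀ σ, 0 ≤ f σ)
    {L : ℕ} (v : Fin L → κ) : 0 ≤ isAvgVec z f v :=
  div_nonneg (Finset.sum_nonneg fun _ _ => mul_nonneg (hz _) (hf _))
    (Finset.sum_nonneg fun _ _ => hz _)

lemma isAvgVec_le_one {κ : Type*} {z f : κ → ℝ} (hz : ∀ σ, 0 ≤ z σ) (hf1 : ∀ σ, f σ ≤ 1)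
    {L : ℕ} (v : Fin L → κ) : isAvgVec z f v ≤ 1 := by
  apply div_le_one_of_le₀
  · exact Finset.sum_le_sum fun i _ => by
      have := mul_le_mul_of_nonneg_left (hf1 (v i)) (hz (v i))
      simpa using this
  · exact Finset.sum_nonneg fun _ _ => hz _

/-- Tail bound for the self-normalized importance-sampling estimate. -/
lemma stat_tail {κ : Type*} [Fintype κ] {Rw z f : κ → ℝ} {b : ℝ}
    (hR : ∀ σ, 0 ≤ Rw σ) (hR1 : ∑ σ, Rw σ = 1)
    (hz : ∀ σ, 0 < z σ) (hzb : ∀ σ, z σ ≤ b)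
    (hf0 : ∀ σ, 0 ≤ f σ) (hf1 : ∀ σ, f σ ≤ 1)
    (hzmean : ∑ σ, Rw σ * z σ = 1) {fbar : ℝ}
    (hfbar : ∑ σ, Rw σ * (z σ * f σ) = fbar)
    {t : ℝ} (ht : 0 < t) (L : ℕ) :
    ∑ v : Fin L → κ, (∏ i, Rw (v i)) *
        (if t ≤ |isAvgVec z f v - fbar| then (1:ℝ) else 0)
      ≤ 2 * Real.exp (-(2 * L * t ^ 2 / b ^ 2)) := by
  have hne : Nonempty κ := by
    by_contra h
    rw [not_nonempty_iff] at h
    rw [Finset.univ_eq_empty, Finset.sum_empty] at hR1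
    exact one_ne_zero hR1.symm
  obtain ⟨σ₀⟩ := hne
  have hb0 : 0 < b := lt_of_lt_of_le (hz σ₀) (hzb σ₀)
  have hfbar0 : 0 ≤ fbar := by
    rw [← hfbar]
    exact Finset.sum_nonneg fun σ _ =>
      mul_nonneg (hR σ) (mul_nonneg (hz σ).le (hf0 σ))
  have hfbar1 : fbar ≤ 1 := by
    rw [← hfbar, ← hzmean]
    apply Finset.sum_le_sum
    intro σ _
    apply mul_le_mul_of_nonneg_left ?_ (hR σ)
    have := mul_le_mul_of_nonneg_left (hf1 σ) (hz σ).le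
    simpa using this
  set W1 : κ → ℝ := fun σ => z σ * (f σ - (fbar + t)) with hW1
  set W2 : κ → ℝ := fun σ => z σ * ((fbar - t) - f σ) with hW2
  have split : ∀ v : Fin L → κ,
      (if t ≤ |isAvgVec z f v - fbar| then (1:ℝ) else 0)
        ≤ (if 0 ≤ ∑ i, W1 (v i) then (1:ℝ) else 0) +
          (if 0 ≤ ∑ i, W2 (v i) then (1:ℝ) else 0) := by
    intro v
    by_cases habs : t ≤ |isAvgVec z f v - fbar|
    · rw [if_pos habs]
      rcases le_abs.mp habs with hup | hdown
      · have h1 : (0:ℝ) ≤ ∑ i, W1 (v i) := by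
          rcases Nat.eq_zero_or_pos L with hL | hL
          · subst hL; simp
          · have hdenom : 0 < ∑ i, z (v i) := by
              apply Finset.sum_pos (fun i _ => hz (v i))
              exact univ_nonempty_iff.mpr (Fin.pos_iff_nonempty.mp hL)
            have hX : (fbar + t) * (∑ i, z (v i)) ≤ ∑ i, z (v i) * f (v i) := by
              simp only [isAvgVec] at hup
              rw [← le_div_iff₀ hdenom]
              linarith
            have hWsum : ∑ i, W1 (v i)
                = (∑ i, z (v i) * f (v i)) - (fbar + t) * (∑ i, z (v i)) := by
              have h' : ∀ i : Fin L, W1 (v i)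
                  = z (v i) * f (v i) - (fbar + t) * z (v i) := fun i => by
                simp only [hW1]; ring
              rw [Finset.sum_congr rfl fun i _ => h' i, Finset.sum_sub_distrib,
                ← Finset.mul_sum]
            rw [hWsum]; linarith
        rw [if_pos h1]
        have h2 : (0:ℝ) ≤ (if 0 ≤ ∑ i, W2 (v i) then (1:ℝ) else 0) := by positivity
        linarith
      · have h2 : (0:ℝ) ≤ ∑ i, W2 (v i) := by
          rcases Nat.eq_zero_or_pos L with hL | hL
          · subst hL; simp
          · have hdenom : 0 < ∑ i, z (v i) := by
              apply Finset.sum_pos (fun i _ => hz (v i))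
              exact univ_nonempty_iff.mpr (Fin.pos_iff_nonempty.mp hL)
            have hX : ∑ i, z (v i) * f (v i) ≤ (fbar - t) * (∑ i, z (v i)) := by
              simp only [isAvgVec] at hdown
              rw [← div_le_iff₀ hdenom]
              linarith
            have hWsum : ∑ i, W2 (v i)
                = (fbar - t) * (∑ i, z (v i)) - (∑ i, z (v i) * f (v i)) := by
              have h' : ∀ i : Fin L, W2 (v i)
                  = (fbar - t) * z (v i) - z (v i) * f (v i) := fun i => by
                simp only [hW2]; ring
              rw [Finset.sum_congr rfl fun i _ => h' i, Finset.sum_sub_distrib,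
                ← Finset.mul_sum]
            rw [hWsum]; linarith
        rw [if_pos h2]
        have h1 : (0:ℝ) ≤ (if 0 ≤ ∑ i, W1 (v i) then (1:ℝ) else 0) := by positivity
        linarith
    · rw [if_neg habs]
      positivity
  have sum_split :
      ∑ v : Fin L → κ, (∏ i, Rw (v i)) * (if t ≤ |isAvgVec z f v - fbar| then (1:ℝ) else 0)
        ≤ (∑ v : Fin L → κ, (∏ i, Rw (v i)) * (if 0 ≤ ∑ i, W1 (v i) then (1:ℝ) else 0)) +
          (∑ v : Fin L → κ, (∏ i, Rw (v i)) * (if 0 ≤ ∑ i, W2 (v i) then (1:ℝ) else 0)) := by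
    rw [← Finset.sum_add_distrib]
    apply Finset.sum_le_sum
    intro v _
    rw [← mul_add]
    exact mul_le_mul_of_nonneg_left (split v)
      (Finset.prod_nonneg fun i _ => hR (v i))
  have degenerate : L = 0 → ∀ W : κ → ℝ,
      ∑ v : Fin L → κ, (∏ i, Rw (v i)) * (if 0 ≤ ∑ i, W (v i) then (1:ℝ) else 0)
        ≤ Real.exp (-(2 * L * t ^ 2 / b ^ 2)) := by
    intro hL W
    subst hL
    simp
  have tail1 : ∑ v : Fin L → κ, (∏ i, Rw (v i)) * (if 0 ≤ ∑ i, W1 (v i) then (1:ℝ) else 0)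
      ≤ Real.exp (-(2 * L * t ^ 2 / b ^ 2)) := by
    rcases le_or_gt (fbar + t) 1 with hc | hc
    · have hm1 : ∑ σ, Rw σ * W1 σ = -t := by
        have h' : ∀ σ, Rw σ * W1 σ
            = Rw σ * (z σ * f σ) - (fbar + t) * (Rw σ * z σ) := fun σ => by
          simp only [hW1]; ring
        rw [Finset.sum_congr rfl fun σ _ => h' σ, Finset.sum_sub_distrib,
          ← Finset.mul_sum, hfbar, hzmean]
        ring
      apply chernoff_bound hR hR1 W1 ht hb0 hm1
        (A := -(b * (fbar + t))) (B := b * (1 - (fbar + t)))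
      · intro σ
        simp only [hW1]
        nlinarith [mul_nonneg (sub_nonneg.mpr (hzb σ)) (by linarith : (0:ℝ) ≤ fbar + t),
          mul_nonneg (hz σ).le (hf0 σ)]
      · intro σ
        simp only [hW1]
        nlinarith [mul_nonneg (sub_nonneg.mpr (hzb σ)) (by linarith : (0:ℝ) ≤ 1 - (fbar + t)),
          mul_nonneg (hz σ).le (by linarith [hf1 σ] : (0:ℝ) ≤ 1 - f σ)]
      · have : b * (1 - (fbar + t)) - -(b * (fbar + t)) = b := by ring
        rw [this]
    · rcases Nat.eq_zero_or_pos L with hL | hL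
      · exact degenerate hL W1
      · have hzero : ∀ v : Fin L → κ, (if 0 ≤ ∑ i, W1 (v i) then (1:ℝ) else 0) = 0 := by
          intro v
          rw [if_neg]
          rw [not_le]
          apply Finset.sum_neg (fun i _ => ?_) (univ_nonempty_iff.mpr (Fin.pos_iff_nonempty.mp hL))
          simp only [hW1]
          nlinarith [hz (v i), hf1 (v i)]
        calc ∑ v : Fin L → κ, (∏ i, Rw (v i)) * (if 0 ≤ ∑ i, W1 (v i) then (1:ℝ) else 0)
            = 0 := by
              apply Finset.sum_eq_zero
              intro v _
              rw [hzero v, mul_zero]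
          _ ≤ _ := (Real.exp_pos _).le
  have tail2 : ∑ v : Fin L → κ, (∏ i, Rw (v i)) * (if 0 ≤ ∑ i, W2 (v i) then (1:ℝ) else 0)
      ≤ Real.exp (-(2 * L * t ^ 2 / b ^ 2)) := by
    rcases le_or_gt t fbar with hc | hc
    · have hm2 : ∑ σ, Rw σ * W2 σ = -t := by
        have h' : ∀ σ, Rw σ * W2 σ
            = (fbar - t) * (Rw σ * z σ) - Rw σ * (z σ * f σ) := fun σ => by
          simp only [hW2]; ring
        rw [Finset.sum_congr rfl fun σ _ => h' σ, Finset.sum_sub_distrib,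
          ← Finset.mul_sum, hfbar, hzmean]
        ring
      apply chernoff_bound hR hR1 W2 ht hb0 hm2
        (A := -(b * (1 - (fbar - t)))) (B := b * (fbar - t))
      · intro σ
        simp only [hW2]
        nlinarith [mul_nonneg (sub_nonneg.mpr (hzb σ))
            (by linarith : (0:ℝ) ≤ 1 - (fbar - t)),
          mul_nonneg (hz σ).le (by linarith [hf1 σ] : (0:ℝ) ≤ 1 - f σ)]
      · intro σ
        simp only [hW2]
        nlinarith [mul_nonneg (sub_nonneg.mpr (hzb σ)) (by linarith : (0:ℝ) ≤ fbar - t),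
          mul_nonneg (hz σ).le (hf0 σ)]
      · have : b * (fbar - t) - -(b * (1 - (fbar - t))) = b := by ring
        rw [this]
    · rcases Nat.eq_zero_or_pos L with hL | hL
      · exact degenerate hL W2
      · have hzero : ∀ v : Fin L → κ, (if 0 ≤ ∑ i, W2 (v i) then (1:ℝ) else 0) = 0 := by
          intro v
          rw [if_neg]
          rw [not_le]
          apply Finset.sum_neg (fun i _ => ?_) (univ_nonempty_iff.mpr (Fin.pos_iff_nonempty.mp hL))
          simp only [hW2]
          nlinarith [hz (v i), hf0 (v i)]
        calc ∑ v : Fin L → κ, (∏ i, Rw (v i)) * (if 0 ≤ ∑ i, W2 (v i) then (1:ℝ) else 0)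
            = 0 := by
              apply Finset.sum_eq_zero
              intro v _
              rw [hzero v, mul_zero]
          _ ≤ _ := (Real.exp_pos _).le
  calc ∑ v : Fin L → κ, (∏ i, Rw (v i)) * (if t ≤ |isAvgVec z f v - fbar| then (1:ℝ) else 0)
      ≤ _ + _ := sum_split
    _ ≤ Real.exp (-(2 * L * t ^ 2 / b ^ 2)) + Real.exp (-(2 * L * t ^ 2 / b ^ 2)) :=
        add_le_add tail1 tail2
    _ = 2 * Real.exp (-(2 * L * t ^ 2 / b ^ 2)) := by ring


section Basic
variable {S : Type*} [Fintype S] {n : ℕ} {y : Fin n → S} {A' : S → S → ℝ} {π' : S → ℝ}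
  {θmin : ℝ} {R : Equiv.Perm (Fin n) → ℝ}

lemma lik_pos (hθ0 : 0 < θmin) (hA'min : ∀ i j, θmin ≤ A' i j) (hπ'min : ∀ i, θmin ≤ π' i)
    (τ : Equiv.Perm (Fin n)) : 0 < lik A' π' y τ := by
  apply Finset.prod_pos
  intro i _
  split_ifs
  · exact lt_of_lt_of_le hθ0 (hπ'min _)
  · exact lt_of_lt_of_le hθ0 (hA'min _ _)

lemma post_pos (hθ0 : 0 < θmin) (hA'min : ∀ i j, θmin ≤ A' i j) (hπ'min : ∀ i, θmin ≤ π' i)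
    (τ : Equiv.Perm (Fin n)) : 0 < post A' π' y τ :=
  div_pos (lik_pos hθ0 hA'min hπ'min τ)
    (Finset.sum_pos (fun σ _ => lik_pos hθ0 hA'min hπ'min σ) univ_nonempty)

lemma post_sum (hθ0 : 0 < θmin) (hA'min : ∀ i j, θmin ≤ A' i j) (hπ'min : ∀ i, θmin ≤ π' i) :
    ∑ τ : Equiv.Perm (Fin n), post A' π' y τ = 1 := by
  unfold post
  rw [← Finset.sum_div, div_self]
  exact ne_of_gt (Finset.sum_pos (fun σ _ => lik_pos hθ0 hA'min hπ'min σ) univ_nonempty)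

lemma R_pos (hθ0 : 0 < θmin) (hA'min : ∀ i j, θmin ≤ A' i j) (hπ'min : ∀ i, θmin ≤ π' i)
    (hRnonneg : ∀ τ, 0 ≤ R τ) (habs : ∀ τ, R τ = 0 → post A' π' y τ = 0)
    (τ : Equiv.Perm (Fin n)) : 0 < R τ := by
  rcases eq_or_lt_of_le (hRnonneg τ) with h | h
  · exact absurd (habs τ h.symm) (ne_of_gt (post_pos hθ0 hA'min hπ'min τ))
  · exact h

lemma astat_nonneg (t' t'' : Fin n) (τ : Equiv.Perm (Fin n)) : 0 ≤ astat t' t'' τ :=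
  Finset.sum_nonneg fun t _ => by split_ifs <;> norm_num

lemma astat_le_one (t' t'' : Fin n) (τ : Equiv.Perm (Fin n)) : astat t' t'' τ ≤ 1 := by
  unfold astat
  have h1 : ∀ t : Fin n,
      (if 0 < t.val ∧ τ t = t' ∧
          τ ⟨t.val - 1, Nat.lt_of_le_of_lt (Nat.sub_le t.val 1) t.isLt⟩ = t''
        then (1:ℝ) else 0) ≤ (if τ t = t' then (1:ℝ) else 0) := by
    intro t
    split_ifs with h h2 h2
    · norm_num
    · exact absurd h.2.1 h2
    · norm_num
    · norm_num
  calc (∑ t, if 0 < t.val ∧ τ t = t' ∧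
          τ ⟨t.val - 1, Nat.lt_of_le_of_lt (Nat.sub_le t.val 1) t.isLt⟩ = t''
        then (1:ℝ) else 0)
      ≤ ∑ t, (if τ t = t' then (1:ℝ) else 0) := Finset.sum_le_sum fun t _ => h1 t
    _ = ∑ u, (if u = t' then (1:ℝ) else 0) := Equiv.sum_comp τ (fun u => if u = t' then (1:ℝ) else 0)
    _ = 1 := by rw [Finset.sum_ite_eq' univ t' (fun _ => (1:ℝ))]; simp

lemma rstat_nonneg (hn : 0 < n) (t' : Fin n) (τ : Equiv.Perm (Fin n)) : 0 ≤ rstat hn t' τ := by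
  unfold rstat; split_ifs <;> norm_num

lemma rstat_le_one (hn : 0 < n) (t' : Fin n) (τ : Equiv.Perm (Fin n)) : rstat hn t' τ ≤ 1 := by
  unfold rstat; split_ifs <;> norm_num

lemma zmean (hθ0 : 0 < θmin) (hA'min : ∀ i j, θmin ≤ A' i j) (hπ'min : ∀ i, θmin ≤ π' i)
    (hRnonneg : ∀ τ, 0 ≤ R τ) (habs : ∀ τ, R τ = 0 → post A' π' y τ = 0) :
    ∑ σ : Equiv.Perm (Fin n), R σ * (post A' π' y σ / R σ) = 1 := by
  rw [← post_sum (y := y) hθ0 hA'min hπ'min]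
  apply Finset.sum_congr rfl
  intro σ _
  rw [mul_comm, div_mul_cancel₀]
  exact ne_of_gt (R_pos hθ0 hA'min hπ'min hRnonneg habs σ)

lemma fzmean (hθ0 : 0 < θmin) (hA'min : ∀ i j, θmin ≤ A' i j) (hπ'min : ∀ i, θmin ≤ π' i)
    (hRnonneg : ∀ τ, 0 ≤ R τ) (habs : ∀ τ, R τ = 0 → post A' π' y τ = 0)
    (f : Equiv.Perm (Fin n) → ℝ) :
    ∑ σ : Equiv.Perm (Fin n), R σ * (post A' π' y σ / R σ * f σ)
      = ∑ σ : Equiv.Perm (Fin n), post A' π' y σ * f σ := by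
  apply Finset.sum_congr rfl
  intro σ _
  have hR := ne_of_gt (R_pos (y := y) hθ0 hA'min hπ'min hRnonneg habs σ)
  field_simp

end Basic

set_option maxHeartbeats 1600000
attribute [local instance] Classical.propDecidable

/-- Per-observation bound: the probability (under the product weight) that some
statistic deviates is less than `γ`. -/
lemma block_bound {S : Type*} [Fintype S] {n : ℕ} (hn : 0 < n) (y : Fin n → S)
    (A' : S → S → ℝ) (π' : S → ℝ) {θmin : ℝ} (hθ0 : 0 < θmin)
    (hA'min : ∀ i j, θmin ≤ A' i j) (hπ'min : ∀ i, θmin ≤ π' i)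
    (R : Equiv.Perm (Fin n) → ℝ) (hRnonneg : ∀ τ, 0 ≤ R τ) (hRsum : ∑ τ, R τ = 1)
    (habs : ∀ τ, R τ = 0 → post A' π' y τ = 0)
    (b : ℝ) (hb : b = Finset.univ.sup' Finset.univ_nonempty (fun τ => post A' π' y τ / R τ))
    (Tr lθ ε γ : ℝ) (hTr : 1 ≤ Tr) (hlθ : 0 < lθ) (hε : 0 < ε) (hγ0 : 0 < γ) (hγ1 : γ < 1)
    (Lm : ℕ)
    (hLm : 2 * Tr ^ 2 * (n:ℝ) ^ 4 * b ^ 2 * lθ ^ 2 / ε ^ 2 * Real.log (2 * (n:ℝ) ^ 2 / γ)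
      ≤ (Lm : ℝ)) :
    ∑ v : Fin Lm → Equiv.Perm (Fin n), (∏ i, R (v i)) *
      (if (∀ t' t'', |isAvgVec (fun σ => post A' π' y σ / R σ) (astat t' t'') v -
              abar A' π' y t' t''| < Real.sqrt (ε ^ 2 / (2 * Tr ^ 2 * (n:ℝ) ^ 4 * lθ ^ 2))) ∧
          (∀ t', |isAvgVec (fun σ => post A' π' y σ / R σ) (rstat hn t') v -
              rbar A' π' hn y t'| < ε / (2 * Tr * (n:ℝ) ^ 2 * lθ))
       then (0:ℝ) else 1) < γ := by
  have hn1 : (1:ℝ) ≤ (n:ℝ) := by exact_mod_cast hn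
  set z : Equiv.Perm (Fin n) → ℝ := fun σ => post A' π' y σ / R σ with hzdef
  have hRpos : ∀ σ, 0 < R σ := R_pos hθ0 hA'min hπ'min hRnonneg habs
  have hzpos : ∀ σ, 0 < z σ := fun σ => div_pos (post_pos hθ0 hA'min hπ'min σ) (hRpos σ)
  have hzb : ∀ σ, z σ ≤ b := fun σ => by
    rw [hb]; exact Finset.le_sup' (fun τ => post A' π' y τ / R τ) (mem_univ σ)
  have hb0 : 0 < b := lt_of_lt_of_le (hzpos (Classical.arbitrary _)) (hzb _)
  set ta := Real.sqrt (ε ^ 2 / (2 * Tr ^ 2 * (n:ℝ) ^ 4 * lθ ^ 2)) with hta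
  set tr := ε / (2 * Tr * (n:ℝ) ^ 2 * lθ) with htr
  have hta0 : 0 < ta := Real.sqrt_pos.mpr (by positivity)
  have htr0 : 0 < tr := by positivity
  have hta2 : ta ^ 2 = ε ^ 2 / (2 * Tr ^ 2 * (n:ℝ) ^ 4 * lθ ^ 2) :=
    Real.sq_sqrt (by positivity)
  have hfrac : 1 < 2 * (n:ℝ) ^ 2 / γ := by
    rw [lt_div_iff₀ hγ0]; nlinarith
  have hβ : 0 < Real.log (2 * (n:ℝ) ^ 2 / γ) := Real.log_pos hfrac
  set β := Real.log (2 * (n:ℝ) ^ 2 / γ) with hβdef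
  have hLpos : 0 < (Lm : ℝ) := lt_of_lt_of_le (by positivity) hLm
  have hzm : ∑ σ, R σ * z σ = 1 := zmean hθ0 hA'min hπ'min hRnonneg habs
  rcases Nat.lt_or_ge n 2 with h2 | h2
  · -- n = 1 : the bad event is empty
    have hn1' : n = 1 := by omega
    subst hn1'
    have hgood : ∀ v : Fin Lm → Equiv.Perm (Fin 1),
        (∀ t' t'', |isAvgVec z (astat t' t'') v - abar A' π' y t' t''| < ta) ∧
        (∀ t', |isAvgVec z (rstat hn t') v - rbar A' π' hn y t'| < tr) := by
      intro v
      constructor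
      · intro t' t''
        have hast : ∀ σ, astat t' t'' σ = 0 := by
          intro σ
          apply Finset.sum_eq_zero
          intro t _
          rw [if_neg]
          rintro ⟨ht, -⟩
          omega
        have h1 : isAvgVec z (astat t' t'') v = 0 := by
          unfold isAvgVec
          rw [Finset.sum_eq_zero fun i _ => by rw [hast, mul_zero], zero_div]
        have h2 : abar A' π' y t' t'' = 0 := by
          unfold abar
          exact Finset.sum_eq_zero fun σ _ => by rw [hast, mul_zero]
        rw [h1, h2]
        simpa using hta0
      · intro t'
        have hrst : ∀ σ, rstat hn t' σ = 1 := by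
          intro σ
          unfold rstat
          rw [if_pos (Subsingleton.elim _ _)]
        have hLm1 : 0 < Lm := by exact_mod_cast hLpos
        have hdenom : 0 < ∑ i : Fin Lm, z (v i) :=
          Finset.sum_pos (fun i _ => hzpos (v i))
            (univ_nonempty_iff.mpr (Fin.pos_iff_nonempty.mp hLm1))
        have h1 : isAvgVec z (rstat hn t') v = 1 := by
          unfold isAvgVec
          rw [Finset.sum_congr rfl fun i _ => by rw [hrst, mul_one]]
          exact div_self (ne_of_gt hdenom)
        have h2 : rbar A' π' hn y t' = 1 := by
          unfold rbar
          rw [Finset.sum_congr rfl fun σ _ => by rw [hrst, mul_one]]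
          exact post_sum hθ0 hA'min hπ'min
        rw [h1, h2]
        simpa using htr0
    calc ∑ v : Fin Lm → Equiv.Perm (Fin 1), (∏ i, R (v i)) *
        (if (∀ t' t'', |isAvgVec z (astat t' t'') v - abar A' π' y t' t''| < ta) ∧
            (∀ t', |isAvgVec z (rstat hn t') v - rbar A' π' hn y t'| < tr)
         then (0:ℝ) else 1)
        = 0 := Finset.sum_eq_zero fun v _ => by rw [if_pos (hgood v), mul_zero]
      _ < γ := hγ0
  · -- n ≥ 2
    have hn2 : (2:ℝ) ≤ (n:ℝ) := by exact_mod_cast h2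
    set E := γ / (2 * (n:ℝ) ^ 2) with hE
    have hE0 : 0 < E := by positivity
    have hexpβ : Real.exp (-β) = E := by
      rw [Real.exp_neg, Real.exp_log (by positivity), inv_div]
    -- per-statistic tail bounds
    have habar : ∀ t' t'', ∑ σ, R σ * (z σ * astat t' t'' σ) = abar A' π' y t' t'' :=
      fun t' t'' => fzmean hθ0 hA'min hπ'min hRnonneg habs _
    have hrbar : ∀ t', ∑ σ, R σ * (z σ * rstat hn t' σ) = rbar A' π' hn y t' :=
      fun t' => fzmean hθ0 hA'min hπ'min hRnonneg habs _
    have per_a : ∀ t' t'', ∑ v : Fin Lm → Equiv.Perm (Fin n), (∏ i, R (v i)) *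
        (if ta ≤ |isAvgVec z (astat t' t'') v - abar A' π' y t' t''| then (1:ℝ) else 0)
          ≤ 2 * (E * E) := by
      intro t' t''
      calc ∑ v : Fin Lm → Equiv.Perm (Fin n), (∏ i, R (v i)) *
          (if ta ≤ |isAvgVec z (astat t' t'') v - abar A' π' y t' t''| then (1:ℝ) else 0)
          ≤ 2 * Real.exp (-(2 * Lm * ta ^ 2 / b ^ 2)) :=
            stat_tail hRnonneg hRsum hzpos hzb (astat_nonneg t' t'') (astat_le_one t' t'')
              hzm (habar t' t'') hta0 Lm
        _ ≤ 2 * (E * E) := by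
            have harg : 2 * β ≤ 2 * (Lm:ℝ) * ta ^ 2 / b ^ 2 := by
              have h1 : (2 * Tr ^ 2 * (n:ℝ) ^ 4 * b ^ 2 * lθ ^ 2 / ε ^ 2 * β)
                  * (2 * ta ^ 2 / b ^ 2) ≤ (Lm : ℝ) * (2 * ta ^ 2 / b ^ 2) :=
                mul_le_mul_of_nonneg_right hLm (by positivity)
              have h2 : (2 * Tr ^ 2 * (n:ℝ) ^ 4 * b ^ 2 * lθ ^ 2 / ε ^ 2 * β)
                  * (2 * ta ^ 2 / b ^ 2) = 2 * β := by
                rw [hta2]; field_simp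
              have h3 : (Lm : ℝ) * (2 * ta ^ 2 / b ^ 2) = 2 * (Lm:ℝ) * ta ^ 2 / b ^ 2 := by
                ring
              linarith
            have : Real.exp (-(2 * Lm * ta ^ 2 / b ^ 2)) ≤ Real.exp (-(2 * β)) :=
              Real.exp_le_exp.mpr (by linarith)
            have hEE : Real.exp (-(2 * β)) = E * E := by
              rw [show -(2*β) = (-β) + (-β) by ring, Real.exp_add, hexpβ]
            nlinarith
    have per_r : ∀ t', ∑ v : Fin Lm → Equiv.Perm (Fin n), (∏ i, R (v i)) *
        (if tr ≤ |isAvgVec z (rstat hn t') v - rbar A' π' hn y t'| then (1:ℝ) else 0)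
          ≤ 2 * E := by
      intro t'
      calc ∑ v : Fin Lm → Equiv.Perm (Fin n), (∏ i, R (v i)) *
          (if tr ≤ |isAvgVec z (rstat hn t') v - rbar A' π' hn y t'| then (1:ℝ) else 0)
          ≤ 2 * Real.exp (-(2 * Lm * tr ^ 2 / b ^ 2)) :=
            stat_tail hRnonneg hRsum hzpos hzb (rstat_nonneg hn t') (rstat_le_one hn t')
              hzm (hrbar t') htr0 Lm
        _ ≤ 2 * E := by
            have harg : β ≤ 2 * (Lm:ℝ) * tr ^ 2 / b ^ 2 := by
              have h1 : (2 * Tr ^ 2 * (n:ℝ) ^ 4 * b ^ 2 * lθ ^ 2 / ε ^ 2 * β)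
                  * (2 * tr ^ 2 / b ^ 2) ≤ (Lm : ℝ) * (2 * tr ^ 2 / b ^ 2) :=
                mul_le_mul_of_nonneg_right hLm (by positivity)
              have h2 : (2 * Tr ^ 2 * (n:ℝ) ^ 4 * b ^ 2 * lθ ^ 2 / ε ^ 2 * β)
                  * (2 * tr ^ 2 / b ^ 2) = β := by
                rw [htr]; field_simp
              have h3 : (Lm : ℝ) * (2 * tr ^ 2 / b ^ 2) = 2 * (Lm:ℝ) * tr ^ 2 / b ^ 2 := by
                ring
              linarith
            have : Real.exp (-(2 * Lm * tr ^ 2 / b ^ 2)) ≤ Real.exp (-β) :=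
              Real.exp_le_exp.mpr (by linarith)
            nlinarith
    -- pointwise union bound
    have hsplit : ∀ v : Fin Lm → Equiv.Perm (Fin n),
        (if (∀ t' t'', |isAvgVec z (astat t' t'') v - abar A' π' y t' t''| < ta) ∧
            (∀ t', |isAvgVec z (rstat hn t') v - rbar A' π' hn y t'| < tr)
         then (0:ℝ) else 1)
        ≤ (∑ t', ∑ t'', (if ta ≤ |isAvgVec z (astat t' t'') v - abar A' π' y t' t''|
              then (1:ℝ) else 0)) +
          (∑ t', (if tr ≤ |isAvgVec z (rstat hn t') v - rbar A' π' hn y t'|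
              then (1:ℝ) else 0)) := by
      intro v
      split_ifs with h
      · refine add_nonneg (Finset.sum_nonneg fun _ _ => Finset.sum_nonneg fun _ _ => ?_)
          (Finset.sum_nonneg fun _ _ => ?_) <;> split_ifs <;> norm_num
      · rcases not_and_or.mp h with h | h
        · push_neg at h
          obtain ⟨t0, t1, hge⟩ := h
          have step1 : (1:ℝ) ≤ ∑ t'', (if ta ≤ |isAvgVec z (astat t0 t'') v -
              abar A' π' y t0 t''| then (1:ℝ) else 0) := by
            calc (1:ℝ) = (if ta ≤ |isAvgVec z (astat t0 t1) v - abar A' π' y t0 t1|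
                then (1:ℝ) else 0) := (if_pos hge).symm
              _ ≤ _ := Finset.single_le_sum
                  (f := fun t'' => (if ta ≤ |isAvgVec z (astat t0 t'') v -
                    abar A' π' y t0 t''| then (1:ℝ) else 0))
                  (fun t _ => by split_ifs <;> norm_num) (mem_univ t1)
          have step2 : (1:ℝ) ≤ ∑ t', ∑ t'', (if ta ≤ |isAvgVec z (astat t' t'') v -
              abar A' π' y t' t''| then (1:ℝ) else 0) :=
            le_trans step1 (Finset.single_le_sum
              (f := fun t' => ∑ t'', (if ta ≤ |isAvgVec z (astat t' t'') v -
                abar A' π' y t' t''| then (1:ℝ) else 0))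
              (fun t _ => Finset.sum_nonneg fun s _ => by split_ifs <;> norm_num) (mem_univ t0))
          have step3 : (0:ℝ) ≤ ∑ t', (if tr ≤ |isAvgVec z (rstat hn t') v -
              rbar A' π' hn y t'| then (1:ℝ) else 0) :=
            Finset.sum_nonneg fun s _ => by split_ifs <;> norm_num
          linarith
        · push_neg at h
          obtain ⟨t0, hge⟩ := h
          have step1 : (1:ℝ) ≤ ∑ t', (if tr ≤ |isAvgVec z (rstat hn t') v -
              rbar A' π' hn y t'| then (1:ℝ) else 0) := by
            calc (1:ℝ) = (if tr ≤ |isAvgVec z (rstat hn t0) v - rbar A' π' hn y t0|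
                then (1:ℝ) else 0) := (if_pos hge).symm
              _ ≤ _ := Finset.single_le_sum
                  (f := fun t' => (if tr ≤ |isAvgVec z (rstat hn t') v -
                    rbar A' π' hn y t'| then (1:ℝ) else 0))
                  (fun t _ => by split_ifs <;> norm_num) (mem_univ t0)
          have step3 : (0:ℝ) ≤ ∑ t', ∑ t'', (if ta ≤ |isAvgVec z (astat t' t'') v -
              abar A' π' y t' t''| then (1:ℝ) else 0) :=
            Finset.sum_nonneg fun s _ => Finset.sum_nonneg fun u _ => by split_ifs <;> norm_num
          linarith
    calc ∑ v : Fin Lm → Equiv.Perm (Fin n), (∏ i, R (v i)) *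
        (if (∀ t' t'', |isAvgVec z (astat t' t'') v - abar A' π' y t' t''| < ta) ∧
            (∀ t', |isAvgVec z (rstat hn t') v - rbar A' π' hn y t'| < tr)
         then (0:ℝ) else 1)
        ≤ ∑ v : Fin Lm → Equiv.Perm (Fin n), (∏ i, R (v i)) *
          ((∑ t', ∑ t'', (if ta ≤ |isAvgVec z (astat t' t'') v - abar A' π' y t' t''|
              then (1:ℝ) else 0)) +
           (∑ t', (if tr ≤ |isAvgVec z (rstat hn t') v - rbar A' π' hn y t'|
              then (1:ℝ) else 0))) := by
          apply Finset.sum_le_sum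
          intro v _
          exact mul_le_mul_of_nonneg_left (hsplit v)
            (Finset.prod_nonneg fun i _ => hRnonneg (v i))
      _ = (∑ t', ∑ t'', ∑ v : Fin Lm → Equiv.Perm (Fin n), (∏ i, R (v i)) *
            (if ta ≤ |isAvgVec z (astat t' t'') v - abar A' π' y t' t''|
              then (1:ℝ) else 0)) +
          (∑ t', ∑ v : Fin Lm → Equiv.Perm (Fin n), (∏ i, R (v i)) *
            (if tr ≤ |isAvgVec z (rstat hn t') v - rbar A' π' hn y t'|
              then (1:ℝ) else 0)) := by
          have e1 : ∀ v : Fin Lm → Equiv.Perm (Fin n), (∏ i, R (v i)) *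
              ((∑ t', ∑ t'', (if ta ≤ |isAvgVec z (astat t' t'') v - abar A' π' y t' t''|
                  then (1:ℝ) else 0)) +
               (∑ t', (if tr ≤ |isAvgVec z (rstat hn t') v - rbar A' π' hn y t'|
                  then (1:ℝ) else 0)))
              = (∑ t', ∑ t'', (∏ i, R (v i)) *
                  (if ta ≤ |isAvgVec z (astat t' t'') v - abar A' π' y t' t''|
                    then (1:ℝ) else 0)) +
                (∑ t', (∏ i, R (v i)) *
                  (if tr ≤ |isAvgVec z (rstat hn t') v - rbar A' π' hn y t'|
                    then (1:ℝ) else 0)) := by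
            intro v
            rw [mul_add, Finset.mul_sum, Finset.mul_sum]
            congr 1
            apply Finset.sum_congr rfl
            intro t' _
            rw [Finset.mul_sum]
          rw [Finset.sum_congr rfl fun v _ => e1 v, Finset.sum_add_distrib]
          congr 1
          · rw [Finset.sum_comm]
            apply Finset.sum_congr rfl
            intro t' _
            rw [Finset.sum_comm]
          · rw [Finset.sum_comm]
      _ ≤ (∑ t' : Fin n, ∑ t'' : Fin n, 2 * (E * E)) + (∑ t' : Fin n, 2 * E) := by
          apply add_le_add
          · exact Finset.sum_le_sum fun t' _ => Finset.sum_le_sum fun t'' _ => per_a t' t''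
          · exact Finset.sum_le_sum fun t' _ => per_r t'
      _ = (n:ℝ) ^ 2 * (2 * (E * E)) + (n:ℝ) * (2 * E) := by
          simp [Finset.sum_const, Finset.card_univ]
          ring
      _ < γ := by
          have hEγ : 2 * (n:ℝ) ^ 2 * E = γ := by rw [hE]; field_simp
          have hE1 : 2 * (n:ℝ) ^ 2 * E < 1 := by rw [hEγ]; exact hγ1
          have hpoly : (0:ℝ) ≤ 2 * (n:ℝ) ^ 2 - 2 * (n:ℝ) - 1 := by nlinarith
          nlinarith [mul_pos (sub_pos.mpr hE1) hE0, mul_nonneg hpoly hE0.le, hE0, hn2]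


lemma log_ratio_bound {θmin a c : ℝ} (hθ0 : 0 < θmin) (hθ1 : θmin < 1)
    (ha : θmin ≤ a) (ha1 : a ≤ 1) (hc : θmin ≤ c) (hc1 : c ≤ 1) :
    |Real.log a - Real.log c| ≤ |Real.log θmin| := by
  have hla : Real.log θmin ≤ Real.log a := Real.log_le_log hθ0 ha
  have hlc : Real.log θmin ≤ Real.log c := Real.log_le_log hθ0 hc
  have ha0 : Real.log a ≤ 0 := Real.log_nonpos (le_trans hθ0.le ha) ha1
  have hc0 : Real.log c ≤ 0 := Real.log_nonpos (le_trans hθ0.le hc) hc1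
  have hneg : Real.log θmin < 0 := Real.log_neg hθ0 hθ1
  rw [abs_of_neg hneg, abs_le]
  constructor <;> linarith

lemma Qaux_diff {S : Type*} [Fintype S] {T : ℕ} {N : Fin T → ℕ} (y : ∀ m, Fin (N m) → S)
    (ah ab : ∀ m, Fin (N m) → Fin (N m) → ℝ) (rh rb : ∀ m, Fin (N m) → ℝ)
    (Aθ A' : S → S → ℝ) (πθ π' : S → ℝ) :
    Qaux y ah rh Aθ πθ - Qaux y ah rh A' π' - (Qaux y ab rb Aθ πθ - Qaux y ab rb A' π')
      = ∑ m, ((∑ t', ∑ t'', (ah m t' t'' - ab m t' t'') *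
          (Real.log (Aθ (y m t'') (y m t')) - Real.log (A' (y m t'') (y m t')))) +
        ∑ t', (rh m t' - rb m t') * (Real.log (πθ (y m t')) - Real.log (π' (y m t')))) := by
  unfold Qaux
  rw [← Finset.sum_sub_distrib, ← Finset.sum_sub_distrib, ← Finset.sum_sub_distrib]
  apply Finset.sum_congr rfl
  intro m _
  simp only [sub_mul, mul_sub, Finset.sum_sub_distrib, Finset.sum_add_distrib]
  ring

lemma block_dev {S : Type*} [Fintype S] {n : ℕ} (hn : 0 < n) (y : Fin n → S)
    (A' Aθ : S → S → ℝ) (π' πθ : S → ℝ) {θmin : ℝ} (hθ0 : 0 < θmin) (hθ1 : θmin < 1)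
    (hA'l : ∀ i j, θmin ≤ A' i j) (hA'u : ∀ i j, A' i j ≤ 1)
    (hπ'l : ∀ i, θmin ≤ π' i) (hπ'u : ∀ i, π' i ≤ 1)
    (hAθl : ∀ i j, θmin ≤ Aθ i j) (hAθu : ∀ i j, Aθ i j ≤ 1)
    (hπθl : ∀ i, θmin ≤ πθ i) (hπθu : ∀ i, πθ i ≤ 1)
    (ah ab : Fin n → Fin n → ℝ) (rh rb : Fin n → ℝ)
    {Tr ε : ℝ} (hTr : 1 ≤ Tr) (hε : 0 < ε)
    (hα : ∀ t' t'', |ah t' t'' - ab t' t''|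
      < Real.sqrt (ε ^ 2 / (2 * Tr ^ 2 * (n:ℝ) ^ 4 * |Real.log θmin| ^ 2)))
    (hr : ∀ t', |rh t' - rb t'| < ε / (2 * Tr * (n:ℝ) ^ 2 * |Real.log θmin|))
    (hα1 : n = 1 → ∀ t' t'', ah t' t'' = ab t' t'') :
    (∑ t', ∑ t'', (ah t' t'' - ab t' t'') *
        (Real.log (Aθ (y t'') (y t')) - Real.log (A' (y t'') (y t'))))
      + ∑ t', (rh t' - rb t') * (Real.log (πθ (y t')) - Real.log (π' (y t')))
      < ε / Tr := by
  set lθ := |Real.log θmin| with hlθ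
  have hlθ0 : 0 < lθ := abs_pos.mpr (Real.log_neg hθ0 hθ1).ne
  have hn1 : (1:ℝ) ≤ (n:ℝ) := by exact_mod_cast hn
  set ta := Real.sqrt (ε ^ 2 / (2 * Tr ^ 2 * (n:ℝ) ^ 4 * lθ ^ 2)) with hta
  set tr := ε / (2 * Tr * (n:ℝ) ^ 2 * lθ) with htr
  have hta0 : 0 < ta := Real.sqrt_pos.mpr (by positivity)
  have htr0 : 0 < tr := by positivity
  have hta2 : ta ^ 2 = ε ^ 2 / (2 * Tr ^ 2 * (n:ℝ) ^ 4 * lθ ^ 2) :=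
    Real.sq_sqrt (by positivity)
  have hrpart : ∑ t', (rh t' - rb t') * (Real.log (πθ (y t')) - Real.log (π' (y t')))
      ≤ (n:ℝ) * (tr * lθ) := by
    calc ∑ t', (rh t' - rb t') * (Real.log (πθ (y t')) - Real.log (π' (y t')))
        ≤ ∑ t' : Fin n, tr * lθ := by
          apply Finset.sum_le_sum
          intro t' _
          calc (rh t' - rb t') * (Real.log (πθ (y t')) - Real.log (π' (y t')))
              ≤ |(rh t' - rb t') * (Real.log (πθ (y t')) - Real.log (π' (y t')))| :=
                le_abs_self _
            _ = |rh t' - rb t'| * |Real.log (πθ (y t')) - Real.log (π' (y t'))| :=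
                abs_mul _ _
            _ ≤ tr * lθ := mul_le_mul (hr t').le
                (log_ratio_bound hθ0 hθ1 (hπθl _) (hπθu _) (hπ'l _) (hπ'u _))
                (abs_nonneg _) htr0.le
      _ = (n:ℝ) * (tr * lθ) := by
          rw [Finset.sum_const, Finset.card_univ, Fintype.card_fin, nsmul_eq_mul]
  rcases Nat.lt_or_ge n 2 with h2 | h2
  · -- n = 1
    have hn1' : n = 1 := by omega
    have hzero : (∑ t', ∑ t'', (ah t' t'' - ab t' t'') *
        (Real.log (Aθ (y t'') (y t')) - Real.log (A' (y t'') (y t')))) = 0 :=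
      Finset.sum_eq_zero fun t' _ => Finset.sum_eq_zero fun t'' _ => by
        rw [hα1 hn1' t' t'', sub_self, zero_mul]
    rw [hzero, zero_add]
    have : (n:ℝ) * (tr * lθ) = ε / (2 * Tr) := by
      rw [htr, hn1']
      push_cast
      field_simp
    have hlt : ε / (2 * Tr) < ε / Tr := by
      apply div_lt_div_of_pos_left hε (by linarith) (by linarith)
    calc ∑ t', (rh t' - rb t') * (Real.log (πθ (y t')) - Real.log (π' (y t')))
        ≤ (n:ℝ) * (tr * lθ) := hrpart
      _ = ε / (2 * Tr) := this
      _ < ε / Tr := hlt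
  · -- n ≥ 2
    have hn2 : (2:ℝ) ≤ (n:ℝ) := by exact_mod_cast h2
    have hapart : (∑ t', ∑ t'', (ah t' t'' - ab t' t'') *
        (Real.log (Aθ (y t'') (y t')) - Real.log (A' (y t'') (y t'))))
        ≤ (n:ℝ) ^ 2 * (ta * lθ) := by
      calc (∑ t', ∑ t'', (ah t' t'' - ab t' t'') *
          (Real.log (Aθ (y t'') (y t')) - Real.log (A' (y t'') (y t'))))
          ≤ ∑ t' : Fin n, ∑ t'' : Fin n, ta * lθ := by
            apply Finset.sum_le_sum
            intro t' _
            apply Finset.sum_le_sum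
            intro t'' _
            calc (ah t' t'' - ab t' t'') *
                (Real.log (Aθ (y t'') (y t')) - Real.log (A' (y t'') (y t')))
                ≤ |(ah t' t'' - ab t' t'') *
                  (Real.log (Aθ (y t'') (y t')) - Real.log (A' (y t'') (y t')))| :=
                  le_abs_self _
              _ = |ah t' t'' - ab t' t''| *
                  |Real.log (Aθ (y t'') (y t')) - Real.log (A' (y t'') (y t'))| :=
                  abs_mul _ _
              _ ≤ ta * lθ := mul_le_mul (hα t' t'').le
                  (log_ratio_bound hθ0 hθ1 (hAθl _ _) (hAθu _ _) (hA'l _ _) (hA'u _ _))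
                  (abs_nonneg _) hta0.le
        _ = (n:ℝ) ^ 2 * (ta * lθ) := by
            simp only [Finset.sum_const, Finset.card_univ, Fintype.card_fin, nsmul_eq_mul]
            ring
    have hA34 : (n:ℝ) ^ 2 * (ta * lθ) < 3 / 4 * (ε / Tr) := by
      have h0 : (0:ℝ) ≤ (n:ℝ) ^ 2 * (ta * lθ) := by positivity
      have hy0 : (0:ℝ) < 3 / 4 * (ε / Tr) := by positivity
      apply lt_of_pow_lt_pow_left₀ 2 hy0.le
      have hsq : ((n:ℝ) ^ 2 * (ta * lθ)) ^ 2 = ε ^ 2 / (2 * Tr ^ 2) := by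
        rw [mul_pow, mul_pow, hta2]
        field_simp
      rw [hsq]
      have hTr0 : (0:ℝ) < Tr := by linarith
      have hexp : (3 / 4 * (ε / Tr)) ^ 2 = 9 * ε ^ 2 / (16 * Tr ^ 2) := by
        field_simp
        ring
      rw [hexp, div_lt_div_iff₀ (by positivity) (by positivity)]
      nlinarith [mul_pos (pow_pos hε 2) (pow_pos hTr0 2)]
    have hB : (n:ℝ) * (tr * lθ) ≤ 1 / 4 * (ε / Tr) := by
      have heq : (n:ℝ) * (tr * lθ) = ε / (2 * Tr * (n:ℝ)) := by
        rw [htr]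
        field_simp
      rw [heq]
      rw [div_le_iff₀ (by positivity)]
      rw [div_mul_eq_mul_div, mul_comm, ← div_mul_eq_mul_div]
      have : 1 / 4 * (ε / Tr) * (2 * Tr * (n:ℝ)) = ε * ((n:ℝ) / 2) := by
        field_simp
        ring
      nlinarith [hε.le]
    calc (∑ t', ∑ t'', (ah t' t'' - ab t' t'') *
        (Real.log (Aθ (y t'') (y t')) - Real.log (A' (y t'') (y t'))))
        + ∑ t', (rh t' - rb t') * (Real.log (πθ (y t')) - Real.log (π' (y t')))
        ≤ (n:ℝ) ^ 2 * (ta * lθ) + (n:ℝ) * (tr * lθ) := add_le_add hapart hrpart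
      _ < 3 / 4 * (ε / Tr) + 1 / 4 * (ε / Tr) := by linarith
      _ = ε / Tr := by ring



lemma isAvg_eq_vec {n L : ℕ} (z f : Equiv.Perm (Fin n) → ℝ) (s : ℕ → Equiv.Perm (Fin n)) :
    isAvg z f L s = isAvgVec z f (fun i : Fin L => s i.val) := by
  unfold isAvg isAvgVec
  rw [Fin.sum_univ_eq_sum_range (fun k => z (s k) * f (s k)),
    Fin.sum_univ_eq_sum_range (fun k => z (s k))]

lemma astat_eq_zero {n : ℕ} (h : n = 1) (t' t'' : Fin n) (τ : Equiv.Perm (Fin n)) :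
    astat t' t'' τ = 0 := by
  apply Finset.sum_eq_zero
  intro t _
  rw [if_neg]
  rintro ⟨ht, -⟩
  have := t.isLt
  omega

/-- Theorem 1, PAM: probably approximately monotonic Monte Carlo
EM update.  If the parameters are bounded below by `θ_min` and
`L_m ≥ (2 T² N_m⁴ b_m² |log θ_min|² / ε²) log(2 N_m² / (1 − (1−δ)^{1/T}))`
importance samples are used for the `m`-th observation, then
`Δ̂(θ̂) − Δ(θ̂) < ε` with probability greater than `1 − δ`. -/
theorem pam_monte_carlo_em
    {Ω : Type*} [MeasurableSpace Ω] (Prob : Measure Ω) [IsProbabilityMeasure Prob]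
    {S : Type*} [Fintype S] [Nonempty S]
    {T : ℕ} (hT : 0 < T) {N : Fin T → ℕ} (hN : ∀ m, 0 < N m)
    (y : ∀ m, Fin (N m) → S) (hy : ∀ m, Function.Injective (y m))
    (A' : S → S → ℝ) (π' : S → ℝ) (hA' : rowStochastic A') (hπ' : probVec π')
    (ε δ θmin : ℝ) (hε : 0 < ε) (hδ : δ ∈ Set.Ioo (0 : ℝ) 1)
    (hθmin : θmin ∈ Set.Ioo (0 : ℝ) ((Fintype.card S : ℝ)⁻¹))
    (hA'min : ∀ i j, θmin ≤ A' i j) (hπ'min : ∀ i, θmin ≤ π' i)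
    (R : ∀ m, Equiv.Perm (Fin (N m)) → ℝ)
    (hRnonneg : ∀ m τ, 0 ≤ R m τ) (hRsum : ∀ m, ∑ τ, R m τ = 1)
    (habs : ∀ m τ, R m τ = 0 → post A' π' (y m) τ = 0)
    (b : Fin T → ℝ)
    (hb : ∀ m, b m = Finset.univ.sup' Finset.univ_nonempty
      (fun τ => post A' π' (y m) τ / R m τ))
    (L : Fin T → ℕ)
    (hL : ∀ m, 2 * (T : ℝ) ^ 2 * (N m : ℝ) ^ 4 * b m ^ 2 * |Real.log θmin| ^ 2 / ε ^ 2 *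
        Real.log (2 * (N m : ℝ) ^ 2 / (1 - (1 - δ) ^ ((T : ℝ)⁻¹))) ≤ (L m : ℝ))
    (τsamp : ∀ m : Fin T, ℕ → Ω → Equiv.Perm (Fin (N m)))
    (hlaw : ∀ m i σ, Prob (τsamp m i ⁻¹' {σ}) = ENNReal.ofReal (R m σ))
    (hindep : iIndepFun
      (m := fun p : (m : Fin T) × ℕ => (⊤ : MeasurableSpace (Equiv.Perm (Fin (N p.1)))))
      (fun p ω => τsamp p.1 p.2 ω) Prob)
    (Ahat : Ω → S → S → ℝ) (πhat : Ω → S → ℝ)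
    (hAhat : ∀ ω, rowStochastic (Ahat ω) ∧ ∀ i j, θmin ≤ Ahat ω i j)
    (hπhat : ∀ ω, probVec (πhat ω) ∧ ∀ i, θmin ≤ πhat ω i)
    (hargmax : ∀ ω (A : S → S → ℝ) (π : S → ℝ), rowStochastic A → probVec π →
      (∀ i j, θmin ≤ A i j) → (∀ i, θmin ≤ π i) →
      Qhat hN y A' π' R L (fun m k => τsamp m k ω) A π ≤
        Qhat hN y A' π' R L (fun m k => τsamp m k ω) (Ahat ω) (πhat ω)) :
    1 - δ < (Prob {ω |
      (Qhat hN y A' π' R L (fun m k => τsamp m k ω) (Ahat ω) (πhat ω) -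
          Qhat hN y A' π' R L (fun m k => τsamp m k ω) A' π') -
        (Qexact hN y A' π' (Ahat ω) (πhat ω) - Qexact hN y A' π' A' π')
      < ε}).toReal := by
  obtain ⟨hδ0, hδ1⟩ := hδ
  obtain ⟨hθmin0, hθminc⟩ := hθmin
  have hcard1 : (1:ℝ) ≤ (Fintype.card S : ℝ) := by
    exact_mod_cast Fintype.card_pos
  have hθ1 : θmin < 1 := lt_of_lt_of_le hθminc
    ((inv_le_one₀ (by linarith)).mpr hcard1)
  set lθ := |Real.log θmin| with hlθdef
  have hlθ0 : 0 < lθ := abs_pos.mpr (Real.log_neg hθmin0 hθ1).ne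
  have hTr1 : (1:ℝ) ≤ (T:ℝ) := by exact_mod_cast hT
  set γ := 1 - (1 - δ) ^ ((T : ℝ)⁻¹) with hγdef
  have hbase0 : (0:ℝ) < 1 - δ := by linarith
  have hbase1 : 1 - δ < 1 := by linarith
  have hpow0 : 0 < (1 - δ) ^ ((T:ℝ)⁻¹) := Real.rpow_pos_of_pos hbase0 _
  have hpow1 : (1 - δ) ^ ((T:ℝ)⁻¹) < 1 :=
    Real.rpow_lt_one hbase0.le hbase1 (by positivity)
  have hγ0 : 0 < γ := by rw [hγdef]; linarith
  have hγ1 : γ < 1 := by rw [hγdef]; linarith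
  have hA'u : ∀ i j, A' i j ≤ 1 := by
    intro i j
    calc A' i j ≤ ∑ k, A' i k := Finset.single_le_sum (fun k _ => hA'.1 i k) (mem_univ j)
      _ = 1 := hA'.2 i
  have hπ'u : ∀ i, π' i ≤ 1 := by
    intro i
    calc π' i ≤ ∑ k, π' k := Finset.single_le_sum (fun k _ => hπ'.1 k) (mem_univ i)
      _ = 1 := hπ'.2
  set z : ∀ m, Equiv.Perm (Fin (N m)) → ℝ := fun m σ => post A' π' (y m) σ / R m σ with hzdef
  set ta : Fin T → ℝ :=
    fun m => Real.sqrt (ε ^ 2 / (2 * (T:ℝ) ^ 2 * (N m : ℝ) ^ 4 * lθ ^ 2)) with htadef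
  set tr : Fin T → ℝ := fun m => ε / (2 * (T:ℝ) * (N m : ℝ) ^ 2 * lθ) with htrdef
  set Good : ∀ m, (Fin (L m) → Equiv.Perm (Fin (N m))) → Prop := fun m v =>
    (∀ t' t'', |isAvgVec (z m) (astat t' t'') v - abar A' π' (y m) t' t''| < ta m) ∧
    (∀ t', |isAvgVec (z m) (rstat (hN m) t') v - rbar A' π' (hN m) (y m) t'| < tr m)
    with hGooddef
  set Tgt : Set Ω := {ω |
      (Qhat hN y A' π' R L (fun m k => τsamp m k ω) (Ahat ω) (πhat ω) -
          Qhat hN y A' π' R L (fun m k => τsamp m k ω) A' π') -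
        (Qexact hN y A' π' (Ahat ω) (πhat ω) - Qexact hN y A' π' A' π')
      < ε} with hTgtdef
  set G : Set Ω := {ω | ∀ m, Good m (fun i => τsamp m i.val ω)} with hGdef
  -- Step 1: on the good event the deviation is small
  have hsub : G ⊆ Tgt := by
    intro ω hω
    rw [hGdef, Set.mem_setOf_eq] at hω
    rw [hTgtdef, Set.mem_setOf_eq]
    have hrew : (Qhat hN y A' π' R L (fun m k => τsamp m k ω) (Ahat ω) (πhat ω) -
          Qhat hN y A' π' R L (fun m k => τsamp m k ω) A' π') -
        (Qexact hN y A' π' (Ahat ω) (πhat ω) - Qexact hN y A' π' A' π')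
        = ∑ m, ((∑ t', ∑ t'',
            ((isAvg (z m) (astat t' t'') (L m) (fun k => τsamp m k ω))
              - abar A' π' (y m) t' t'') *
            (Real.log (Ahat ω (y m t'') (y m t')) - Real.log (A' (y m t'') (y m t')))) +
          ∑ t', ((isAvg (z m) (rstat (hN m) t') (L m) (fun k => τsamp m k ω))
              - rbar A' π' (hN m) (y m) t') *
            (Real.log (πhat ω (y m t')) - Real.log (π' (y m t')))) :=
      Qaux_diff y
        (fun m t' t'' => isAvg (z m) (astat t' t'') (L m) (fun k => τsamp m k ω))
        (fun m => abar A' π' (y m))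
        (fun m t' => isAvg (z m) (rstat (hN m) t') (L m) (fun k => τsamp m k ω))
        (fun m => rbar A' π' (hN m) (y m)) (Ahat ω) A' (πhat ω) π'
    rw [hrew]
    have hdev : ∀ m : Fin T, ((∑ t', ∑ t'',
            ((isAvg (z m) (astat t' t'') (L m) (fun k => τsamp m k ω))
              - abar A' π' (y m) t' t'') *
            (Real.log (Ahat ω (y m t'') (y m t')) - Real.log (A' (y m t'') (y m t')))) +
          ∑ t', ((isAvg (z m) (rstat (hN m) t') (L m) (fun k => τsamp m k ω))
              - rbar A' π' (hN m) (y m) t') *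
            (Real.log (πhat ω (y m t')) - Real.log (π' (y m t'))))
        < ε / (T:ℝ) := by
      intro m
      have hωm := hω m
      rw [hGooddef] at hωm
      obtain ⟨hωa, hωr⟩ := hωm
      have hAθu : ∀ i j, Ahat ω i j ≤ 1 := by
        intro i j
        calc Ahat ω i j ≤ ∑ k, Ahat ω i k :=
            Finset.single_le_sum (fun k _ => (hAhat ω).1.1 i k) (mem_univ j)
          _ = 1 := (hAhat ω).1.2 i
      have hπθu : ∀ i, πhat ω i ≤ 1 := by
        intro i
        calc πhat ω i ≤ ∑ k, πhat ω k :=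
            Finset.single_le_sum (fun k _ => (hπhat ω).1.1 k) (mem_univ i)
          _ = 1 := (hπhat ω).1.2
      apply block_dev (hN m) (y m) A' (Ahat ω) π' (πhat ω) hθmin0 hθ1
        hA'min hA'u hπ'min hπ'u ((hAhat ω).2) hAθu ((hπhat ω).2) hπθu
        _ _ _ _ hTr1 hε
      · intro t' t''
        rw [isAvg_eq_vec]
        exact hωa t' t''
      · intro t'
        rw [isAvg_eq_vec]
        exact hωr t'
      · intro h1 t' t''
        have h1' : isAvg (z m) (astat t' t'') (L m) (fun k => τsamp m k ω) = 0 := by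
          unfold isAvg
          rw [Finset.sum_eq_zero fun i _ => by rw [astat_eq_zero h1, mul_zero], zero_div]
        have h2' : abar A' π' (y m) t' t'' = 0 := by
          unfold abar
          exact Finset.sum_eq_zero fun σ _ => by rw [astat_eq_zero h1, mul_zero]
        rw [h1', h2']
    calc ∑ m, ((∑ t', ∑ t'',
            ((isAvg (z m) (astat t' t'') (L m) (fun k => τsamp m k ω))
              - abar A' π' (y m) t' t'') *
            (Real.log (Ahat ω (y m t'') (y m t')) - Real.log (A' (y m t'') (y m t')))) +
          ∑ t', ((isAvg (z m) (rstat (hN m) t') (L m) (fun k => τsamp m k ω))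
              - rbar A' π' (hN m) (y m) t') *
            (Real.log (πhat ω (y m t')) - Real.log (π' (y m t'))))
        < ∑ _m : Fin T, ε / (T:ℝ) :=
          Finset.sum_lt_sum_of_nonempty
            (Finset.univ_nonempty_iff.mpr (Fin.pos_iff_nonempty.mp hT))
            (fun m _ => hdev m)
      _ = ε := by
          rw [Finset.sum_const, Finset.card_univ, Fintype.card_fin, nsmul_eq_mul]
          field_simp
  -- Step 2: probability of the good event
  set c' : (∀ m, Fin (L m) → Equiv.Perm (Fin (N m))) → ∀ m, ℕ → Equiv.Perm (Fin (N m)) :=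
    fun c m k => if h : k < L m then c m ⟨k, h⟩ else 1 with hc'def
  set F : Finset ((m : Fin T) × ℕ) := Finset.univ.sigma (fun m => Finset.range (L m))
    with hFdef
  set cell : (∀ m, Fin (L m) → Equiv.Perm (Fin (N m))) → Set Ω :=
    fun c => ⋂ p ∈ F, (fun ω => τsamp p.1 p.2 ω) ⁻¹' {c' c p.1 p.2} with hcelldef
  have hcellmeas : ∀ c, Prob (cell c)
      = ∏ m, ∏ i : Fin (L m), ENNReal.ofReal (R m (c m i)) := by
    intro c
    have hmeas := (iIndepFun_iff_measure_inter_preimage_eq_mul.mp hindep) F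
      (sets := fun p => {c' c p.1 p.2})
      (fun p _ => MeasurableSpace.measurableSet_top)
    calc Prob (cell c)
        = ∏ p ∈ F, Prob ((fun ω => τsamp p.1 p.2 ω) ⁻¹' {c' c p.1 p.2}) := hmeas
      _ = ∏ m, ∏ i ∈ Finset.range (L m), Prob (τsamp m i ⁻¹' {c' c m i}) := by
          rw [hFdef, Finset.prod_sigma]
      _ = ∏ m, ∏ i : Fin (L m), ENNReal.ofReal (R m (c m i)) := by
          apply Finset.prod_congr rfl
          intro m _
          calc ∏ i ∈ Finset.range (L m), Prob (τsamp m i ⁻¹' {c' c m i})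
              = ∏ i ∈ Finset.range (L m), ENNReal.ofReal (R m (c' c m i)) :=
                Finset.prod_congr rfl fun i _ => hlaw m i _
            _ = ∏ i : Fin (L m), ENNReal.ofReal (R m (c' c m i.val)) :=
                (Fin.prod_univ_eq_prod_range (fun i => ENNReal.ofReal (R m (c' c m i))) _).symm
            _ = ∏ i : Fin (L m), ENNReal.ofReal (R m (c m i)) := by
                apply Finset.prod_congr rfl
                intro i _
                rw [hc'def]
                simp only [i.isLt, dif_pos, Fin.eta]
  have hcover : ∀ ω, ω ∈ cell (fun m i => τsamp m i.val ω) := by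
    intro ω
    rw [hcelldef]
    simp only [Set.mem_iInter, Set.mem_preimage, Set.mem_singleton_iff]
    intro p hp
    rw [hFdef, Finset.mem_sigma, Finset.mem_range] at hp
    rw [hc'def]
    simp only [hp.2, dif_pos]
  set Kbad : Finset (∀ m, Fin (L m) → Equiv.Perm (Fin (N m))) :=
    Finset.univ.filter (fun c => ¬ ∀ m, Good m (c m)) with hKbaddef
  have hGcsub : Gᶜ ⊆ ⋃ c ∈ Kbad, cell c := by
    intro ω hω
    rw [hGdef] at hω
    simp only [Set.mem_compl_iff, Set.mem_setOf_eq] at hω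
    have hc : (fun m i => τsamp m i.val ω) ∈ Kbad := by
      rw [hKbaddef, Finset.mem_filter]
      exact ⟨mem_univ _, hω⟩
    simp only [Set.mem_iUnion]
    exact ⟨_, hc, hcover ω⟩
  set w : (∀ m, Fin (L m) → Equiv.Perm (Fin (N m))) → ℝ :=
    fun c => ∏ m, ∏ i, R m (c m i) with hwdef
  have hw0 : ∀ c, 0 ≤ w c := fun c =>
    Finset.prod_nonneg fun m _ => Finset.prod_nonneg fun i _ => hRnonneg _ _
  have hcellw : ∀ c, Prob (cell c) = ENNReal.ofReal (w c) := by
    intro c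
    rw [hcellmeas c, hwdef,
      ENNReal.ofReal_prod_of_nonneg
        (fun m _ => Finset.prod_nonneg fun i _ => hRnonneg _ _)]
    exact Finset.prod_congr rfl fun m _ =>
      (ENNReal.ofReal_prod_of_nonneg (fun i _ => hRnonneg _ _)).symm
  have hGc : Prob Gᶜ ≤ ENNReal.ofReal (∑ c ∈ Kbad, w c) := by
    calc Prob Gᶜ ≤ Prob (⋃ c ∈ Kbad, cell c) := measure_mono hGcsub
      _ ≤ ∑ c ∈ Kbad, Prob (cell c) := measure_biUnion_finset_le Kbad cell
      _ = ∑ c ∈ Kbad, ENNReal.ofReal (w c) := Finset.sum_congr rfl fun c _ => hcellw c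
      _ = ENNReal.ofReal (∑ c ∈ Kbad, w c) :=
          (ENNReal.ofReal_sum_of_nonneg (fun c _ => hw0 c)).symm
  -- Step 3: per-block bounds and factorization
  set q : Fin T → ℝ := fun m => ∑ v : Fin (L m) → Equiv.Perm (Fin (N m)),
    (∏ i, R m (v i)) * (if Good m v then (0:ℝ) else 1) with hqdef
  have hq : ∀ m, q m < γ := by
    intro m
    rw [hqdef]
    exact block_bound (hN m) (y m) A' π' hθmin0 hA'min hπ'min (R m) (hRnonneg m)
      (hRsum m) (habs m) (b m) (hb m) (T:ℝ) lθ ε γ hTr1 hlθ0 hε hγ0 hγ1 (L m) (hL m)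
  have hq0 : ∀ m, 0 ≤ q m := by
    intro m
    rw [hqdef]
    apply Finset.sum_nonneg
    intro v _
    apply mul_nonneg (Finset.prod_nonneg fun i _ => hRnonneg m _)
    split_ifs <;> norm_num
  have hone : ∀ m : Fin T, ∑ v : Fin (L m) → Equiv.Perm (Fin (N m)),
      (∏ i, R m (v i)) = 1 := by
    intro m
    rw [← Fintype.prod_sum (fun (_ : Fin (L m)) (σ : Equiv.Perm (Fin (N m))) => R m σ)]
    rw [Finset.prod_congr rfl fun i _ => hRsum m]
    exact Finset.prod_const_one
  have htotal : ∑ c ∈ Kbad, w c = 1 - ∏ m, (1 - q m) := by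
    have h1 : ∑ c ∈ Kbad, w c
        = ∑ c : ∀ m, Fin (L m) → Equiv.Perm (Fin (N m)),
            w c * (if (∀ m, Good m (c m)) then (0:ℝ) else 1) := by
      rw [hKbaddef, Finset.sum_filter]
      apply Finset.sum_congr rfl
      intro c _
      by_cases h : ∀ m, Good m (c m)
      · rw [if_neg (not_not_intro h), if_pos h, mul_zero]
      · rw [if_pos h, if_neg h, mul_one]
    have h2 : ∀ c : ∀ m, Fin (L m) → Equiv.Perm (Fin (N m)),
        w c * (if (∀ m, Good m (c m)) then (0:ℝ) else 1)
        = w c - ∏ m, ((∏ i, R m (c m i)) * (if Good m (c m) then (1:ℝ) else 0)) := by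
      intro c
      rw [Finset.prod_mul_distrib]
      have hprodind : (∏ m, (if Good m (c m) then (1:ℝ) else 0))
          = (if (∀ m, Good m (c m)) then (1:ℝ) else 0) := by
        by_cases h : ∀ m, Good m (c m)
        · rw [if_pos h, Finset.prod_congr rfl fun m _ => if_pos (h m)]
          exact Finset.prod_const_one
        · rw [if_neg h]
          push_neg at h
          obtain ⟨m0, hm0⟩ := h
          exact Finset.prod_eq_zero (mem_univ m0) (if_neg hm0)
      rw [hprodind, hwdef]
      by_cases h : ∀ m, Good m (c m)
      · rw [if_pos h, if_pos h, mul_zero, mul_one, sub_self]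
      · rw [if_neg h, if_neg h, mul_one, mul_zero, sub_zero]
    have h3 : ∑ c : ∀ m, Fin (L m) → Equiv.Perm (Fin (N m)), w c = 1 := by
      rw [hwdef, ← Fintype.prod_sum
        (fun m (v : Fin (L m) → Equiv.Perm (Fin (N m))) => ∏ i, R m (v i))]
      rw [Finset.prod_congr rfl fun m _ => hone m]
      exact Finset.prod_const_one
    have h4 : ∑ c : ∀ m, Fin (L m) → Equiv.Perm (Fin (N m)),
        ∏ m, ((∏ i, R m (c m i)) * (if Good m (c m) then (1:ℝ) else 0))
        = ∏ m, (1 - q m) := by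
      rw [← Fintype.prod_sum (fun m (v : Fin (L m) → Equiv.Perm (Fin (N m))) =>
        (∏ i, R m (v i)) * (if Good m v then (1:ℝ) else 0))]
      apply Finset.prod_congr rfl
      intro m _
      have hsw : ∀ v : Fin (L m) → Equiv.Perm (Fin (N m)),
          (∏ i, R m (v i)) * (if Good m v then (1:ℝ) else 0)
          = (∏ i, R m (v i)) - (∏ i, R m (v i)) * (if Good m v then (0:ℝ) else 1) := by
        intro v
        by_cases h : Good m v
        · rw [if_pos h, if_pos h, mul_one, mul_zero, sub_zero]
        · rw [if_neg h, if_neg h, mul_zero, mul_one, sub_self]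
      rw [Finset.sum_congr rfl fun v _ => hsw v, Finset.sum_sub_distrib, hone m, hqdef]
    rw [h1, Finset.sum_congr rfl fun c _ => h2 c, Finset.sum_sub_distrib, h3, h4]
  have hprodgt : ∏ m : Fin T, ((1:ℝ) - γ) < ∏ m, (1 - q m) := by
    apply Finset.prod_lt_prod_of_nonempty
    · intro m _; linarith
    · intro m _; linarith [hq m]
    · exact Finset.univ_nonempty_iff.mpr (Fin.pos_iff_nonempty.mp hT)
  have hpow : ∏ _m : Fin T, ((1:ℝ) - γ) = 1 - δ := by
    rw [Finset.prod_const, Finset.card_univ, Fintype.card_fin, hγdef]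
    have h5 : (1:ℝ) - (1 - (1 - δ) ^ ((T:ℝ)⁻¹)) = (1 - δ) ^ ((T:ℝ)⁻¹) := by ring
    rw [h5, ← Real.rpow_natCast ((1 - δ) ^ ((T:ℝ)⁻¹)) T, ← Real.rpow_mul hbase0.le]
    rw [inv_mul_cancel₀ (by exact_mod_cast hT.ne' : (T:ℝ) ≠ 0), Real.rpow_one]
  have hWbad : ∑ c ∈ Kbad, w c < δ := by
    rw [htotal]
    have := hprodgt
    rw [hpow] at this
    linarith
  have hW0 : 0 ≤ ∑ c ∈ Kbad, w c := Finset.sum_nonneg fun c _ => hw0 c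
  -- Step 4: conclude
  have hT2 : (1:ENNReal) ≤ Prob G + Prob Gᶜ := by
    have := measure_union_le (μ := Prob) G Gᶜ
    rw [Set.union_compl_self, measure_univ] at this
    exact this
  have hT3 : (1:ENNReal) ≤ Prob Tgt + ENNReal.ofReal (∑ c ∈ Kbad, w c) :=
    le_trans hT2 (add_le_add (measure_mono hsub) hGc)
  have hT4 : 1 - ENNReal.ofReal (∑ c ∈ Kbad, w c) ≤ Prob Tgt := by
    rw [tsub_le_iff_right]
    exact hT3
  have hT5 : ((1:ENNReal) - ENNReal.ofReal (∑ c ∈ Kbad, w c)).toReal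
      = 1 - ∑ c ∈ Kbad, w c := by
    rw [ENNReal.toReal_sub_of_le (ENNReal.ofReal_le_one.mpr (by linarith)) (by simp)]
    rw [ENNReal.toReal_one, ENNReal.toReal_ofReal hW0]
  calc 1 - δ < 1 - ∑ c ∈ Kbad, w c := by linarith
    _ = ((1:ENNReal) - ENNReal.ofReal (∑ c ∈ Kbad, w c)).toReal := hT5.symm
    _ ≤ (Prob Tgt).toReal := ENNReal.toReal_mono (measure_ne_top _ _) hT4


end NICO
end

section
/- Under the stated assumptions, for any δ ∈ (0,1), with probability greater than 1 − δ, μ̂_L − μ < √( 2 b² log(2/δ) / L ). -/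
open Finset MeasureTheory ProbabilityTheory

lemma mgf_le_of_ae_abs_le {Ω : Type*} [MeasurableSpace Ω] (P : Measure Ω)
    [IsProbabilityMeasure P] {V : Ω → ℝ} (hVm : Measurable V) {B : ℝ} (hB : 0 < B)
    (hbd : ∀ᵐ ω ∂P, |V ω| ≤ B) (hmean : ∫ ω, V ω ∂P = 0) (t : ℝ) :
    mgf V P t ≤ Real.exp (t ^ 2 * B ^ 2 / 2) := by
  have hVint : Integrable V P := by
    refine Integrable.mono' (integrable_const B) hVm.aestronglyMeasurable ?_
    filter_upwards [hbd] with ω h using by simpa [Real.norm_eq_abs] using h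
  have hexp_int : Integrable (fun ω => Real.exp (t * V ω)) P := by
    refine Integrable.mono' (integrable_const (Real.exp (|t| * B)))
      (hVm.const_mul t).exp.aestronglyMeasurable ?_
    filter_upwards [hbd] with ω h
    rw [Real.norm_eq_abs, Real.abs_exp, Real.exp_le_exp]
    calc t * V ω ≤ |t * V ω| := le_abs_self _
      _ = |t| * |V ω| := abs_mul _ _
      _ ≤ |t| * B := by gcongr
  have hpt : ∀ᵐ ω ∂P, Real.exp (t * V ω) ≤
      Real.cosh (t * B) + (Real.sinh (t * B) / B) * V ω := by
    filter_upwards [hbd] with ω h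
    set v := V ω with hv
    have h1 : (B - v) / (2 * B) ≥ 0 := by
      have h0 : 0 ≤ B - v := by have := (abs_le.mp h).2; linarith
      exact div_nonneg h0 (by positivity)
    have h2 : (B + v) / (2 * B) ≥ 0 := by
      have : -B ≤ v := (abs_le.mp h).1
      have h0 : 0 ≤ B + v := by linarith
      exact div_nonneg h0 (by positivity)
    have hsum : (B - v) / (2 * B) + (B + v) / (2 * B) = 1 := by
      field_simp; ring
    have hconv := convexOn_exp.2 (Set.mem_univ (-(t * B))) (Set.mem_univ (t * B))
      h1 h2 hsum
    simp only [smul_eq_mul] at hconv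
    have hB' : (2 * B) ≠ 0 := by positivity
    have hrw : (B - v) / (2 * B) * (-(t * B)) + (B + v) / (2 * B) * (t * B) = t * v := by
      rw [div_mul_eq_mul_div, div_mul_eq_mul_div, ← add_div, div_eq_iff hB']
      ring
    rw [hrw] at hconv
    calc Real.exp (t * v) ≤ (B - v) / (2 * B) * Real.exp (-(t * B))
          + (B + v) / (2 * B) * Real.exp (t * B) := hconv
      _ = Real.cosh (t * B) + (Real.sinh (t * B) / B) * v := by
          rw [Real.cosh_eq, Real.sinh_eq]
          field_simp
          ring
  have hint2 : Integrable (fun ω => Real.cosh (t * B) + (Real.sinh (t * B) / B) * V ω) P :=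
    (integrable_const _).add (hVint.const_mul _)
  calc mgf V P t = ∫ ω, Real.exp (t * V ω) ∂P := rfl
    _ ≤ ∫ ω, (Real.cosh (t * B) + (Real.sinh (t * B) / B) * V ω) ∂P :=
        integral_mono_ae hexp_int hint2 hpt
    _ = Real.cosh (t * B) + (Real.sinh (t * B) / B) * ∫ ω, V ω ∂P := by
        rw [integral_add (integrable_const _) (hVint.const_mul _), integral_const,
          integral_const_mul]
        simp
    _ = Real.cosh (t * B) := by rw [hmean]; ring
    _ ≤ Real.exp ((t * B) ^ 2 / 2) := Real.cosh_le_exp_half_sq _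
    _ = Real.exp (t ^ 2 * B ^ 2 / 2) := by rw [mul_pow]

set_option maxHeartbeats 1000000 in
/-- Proposition 1: additive concentration of the self-normalized
importance-sampling estimator.  For i.i.d. pairs `(Xᵢ, Zᵢ)` with `Xᵢ ∈ {0,1}`,
`Zᵢ ∈ [0,b]`, `E[Zᵢ] = 1` and `E[ZᵢXᵢ] = μ`, with probability greater than
`1 − δ` the estimate `μ̂_L = (∑ ZᵢXᵢ)/(∑ Zᵢ)` satisfies
`μ̂_L − μ < √(2 b² log(2/δ) / L)`. -/
theorem selfNormalized_IS_additive_concentration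
    {Ω : Type*} [MeasurableSpace Ω] (Prob : Measure Ω) [IsProbabilityMeasure Prob]
    (X Z : ℕ → Ω → ℝ) (b μ : ℝ) (hb : 0 < b)
    (hmeas : ∀ i, Measurable fun ω => (X i ω, Z i ω))
    (hindep : iIndepFun
      (fun i ω => (X i ω, Z i ω)) Prob)
    (hident : ∀ i, IdentDistrib (fun ω => (X i ω, Z i ω)) (fun ω => (X 0 ω, Z 0 ω)) Prob Prob)
    (hX : ∀ i, ∀ᵐ ω ∂Prob, X i ω = 0 ∨ X i ω = 1)
    (hZ : ∀ i, ∀ᵐ ω ∂Prob, Z i ω ∈ Set.Icc 0 b)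
    (hEZ : ∀ i, ∫ ω, Z i ω ∂Prob = 1)
    (hEZX : ∀ i, ∫ ω, Z i ω * X i ω ∂Prob = μ)
    (L : ℕ) (hL : 0 < L) (δ : ℝ) (hδ : δ ∈ Set.Ioo (0 : ℝ) 1) :
    1 - δ < (Prob {ω | (∑ i ∈ range L, Z i ω * X i ω) / (∑ i ∈ range L, Z i ω) - μ
        < Real.sqrt (2 * b ^ 2 * Real.log (2 / δ) / L)}).toReal := by
  obtain ⟨hδ0, hδ1⟩ := hδ
  set ε := Real.sqrt (2 * b ^ 2 * Real.log (2 / δ) / L) with hε_def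
  have hlog : 0 < Real.log (2 / δ) := Real.log_pos (by rw [lt_div_iff₀ hδ0]; linarith)
  have hLpos : (0:ℝ) < L := by exact_mod_cast hL
  have hεsq : ε ^ 2 = 2 * b ^ 2 * Real.log (2 / δ) / L :=
    Real.sq_sqrt (by positivity)
  have hε : 0 < ε := Real.sqrt_pos.mpr (by positivity)
  have hXm : ∀ i, Measurable (X i) := fun i => measurable_fst.comp (hmeas i)
  have hZm : ∀ i, Measurable (Z i) := fun i => measurable_snd.comp (hmeas i)
  have hZint : ∀ i, Integrable (Z i) Prob := by
    intro i
    refine Integrable.mono' (integrable_const b) (hZm i).aestronglyMeasurable ?_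
    filter_upwards [hZ i] with ω h
    rw [Real.norm_eq_abs, abs_le]
    exact ⟨by linarith [h.1], h.2⟩
  have hZXint : ∀ i, Integrable (fun ω => Z i ω * X i ω) Prob := by
    intro i
    refine Integrable.mono' (integrable_const b) ((hZm i).mul (hXm i)).aestronglyMeasurable ?_
    filter_upwards [hZ i, hX i] with ω h1 h2
    rw [Real.norm_eq_abs, abs_le]
    rcases h2 with h2 | h2 <;> rw [h2]
    · simp [hb.le]
    · rw [mul_one]; exact ⟨by linarith [h1.1], h1.2⟩
  have hb1 : (1:ℝ) ≤ b := by
    have h := integral_mono_ae (hZint 0) (integrable_const b) ((hZ 0).mono fun ω h => h.2)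
    rwa [hEZ 0, integral_const, probReal_univ, one_smul] at h
  have hμ0 : 0 ≤ μ := by
    rw [← hEZX 0]
    apply integral_nonneg_of_ae
    filter_upwards [hZ 0, hX 0] with ω h1 h2
    rcases h2 with h2 | h2 <;> rw [h2]
    · simp
    · rw [mul_one]; exact h1.1
  have hG : ∀ᵐ ω ∂Prob, ∀ i,
      (X i ω = 0 ∨ X i ω = 1) ∧ Z i ω ∈ Set.Icc 0 b :=
    MeasureTheory.ae_all_iff.mpr fun i => (hX i).and (hZ i)
  rcases le_or_gt (μ + ε) 1 with hcase | hcase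
  · -- main case : μ + ε ≤ 1
    set t : ℝ := ε / b ^ 2 with ht_def
    have ht0 : 0 ≤ t := by positivity
    set V : ℕ → Ω → ℝ := fun i ω => Z i ω * X i ω - (μ + ε) * Z i ω + ε with hV_def
    have hVm : ∀ i, Measurable (V i) :=
      fun i => (((hZm i).mul (hXm i)).sub ((hZm i).const_mul _)).add_const _
    have hVmean : ∀ i, ∫ ω, V i ω ∂Prob = 0 := by
      intro i
      show ∫ ω, (Z i ω * X i ω - (μ + ε) * Z i ω + ε) ∂Prob = 0
      have hint1 : Integrable (fun ω => Z i ω * X i ω - (μ + ε) * Z i ω) Prob :=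
        (hZXint i).sub ((hZint i).const_mul (μ + ε))
      rw [integral_add hint1 (integrable_const ε),
        integral_sub (hZXint i) ((hZint i).const_mul (μ + ε)),
        hEZX i, integral_const_mul, hEZ i, integral_const, probReal_univ]
      simp
    have hVbd : ∀ i, ∀ᵐ ω ∂Prob, |V i ω| ≤ b := by
      intro i
      filter_upwards [hZ i, hX i] with ω h1 h2
      obtain ⟨hz0, hzb⟩ := h1
      have hμε0 : (0:ℝ) ≤ μ + ε := by linarith
      have t1 : 0 ≤ (1 - (μ + ε)) * Z i ω := mul_nonneg (by linarith) hz0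
      have t2 : (1 - (μ + ε)) * Z i ω ≤ (1 - (μ + ε)) * b :=
        mul_le_mul_of_nonneg_left hzb (by linarith)
      have t3 : (μ + ε) * 1 ≤ (μ + ε) * b := mul_le_mul_of_nonneg_left hb1 hμε0
      have t4 : 0 ≤ (μ + ε) * Z i ω := mul_nonneg hμε0 hz0
      have t5 : (μ + ε) * Z i ω ≤ (μ + ε) * b := mul_le_mul_of_nonneg_left hzb hμε0
      rw [abs_le]
      show -b ≤ Z i ω * X i ω - (μ + ε) * Z i ω + ε ∧
        Z i ω * X i ω - (μ + ε) * Z i ω + ε ≤ b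
      rcases h2 with h2 | h2 <;> rw [h2]
      · constructor <;> nlinarith
      · constructor <;> nlinarith
    have hgm : Measurable fun p : ℝ × ℝ => p.2 * p.1 - (μ + ε) * p.2 + ε :=
      ((measurable_snd.mul measurable_fst).sub (measurable_snd.const_mul _)).add_const _
    have hVindep : iIndepFun V Prob :=
      hindep.comp (fun _ => fun p : ℝ × ℝ => p.2 * p.1 - (μ + ε) * p.2 + ε) fun _ => hgm
    have hmgf : ∀ i, mgf (V i) Prob t ≤ Real.exp (t ^ 2 * b ^ 2 / 2) := fun i =>
      mgf_le_of_ae_abs_le Prob (hVm i) hb (hVbd i) (hVmean i) t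
    have hSbd : ∀ᵐ ω ∂Prob, |∑ i ∈ range L, V i ω| ≤ L * b := by
      have h : ∀ᵐ ω ∂Prob, ∀ i, |V i ω| ≤ b := MeasureTheory.ae_all_iff.mpr hVbd
      filter_upwards [h] with ω hω
      calc |∑ i ∈ range L, V i ω| ≤ ∑ i ∈ range L, |V i ω| := Finset.abs_sum_le_sum_abs _ _
        _ ≤ ∑ i ∈ range L, b := Finset.sum_le_sum fun i _ => hω i
        _ = L * b := by simp [mul_comm]
    have hsum_apply : (∑ i ∈ range L, V i) = fun ω => ∑ i ∈ range L, V i ω := by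
      funext ω; exact Finset.sum_apply ω (range L) V
    have hSm : Measurable fun ω => ∑ i ∈ range L, V i ω :=
      Finset.measurable_sum _ fun i _ => hVm i
    have hSint : Integrable (fun ω => Real.exp (t * (∑ i ∈ range L, V i) ω)) Prob := by
      rw [hsum_apply]
      refine Integrable.mono' (integrable_const (Real.exp (t * (L * b))))
        (hSm.const_mul t).exp.aestronglyMeasurable ?_
      filter_upwards [hSbd] with ω h
      rw [Real.norm_eq_abs, Real.abs_exp, Real.exp_le_exp]
      calc t * ∑ i ∈ range L, V i ω ≤ |t * ∑ i ∈ range L, V i ω| := le_abs_self _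
        _ = t * |∑ i ∈ range L, V i ω| := by rw [abs_mul, abs_of_nonneg ht0]
        _ ≤ t * (L * b) := by gcongr
    have hchern := measure_ge_le_exp_mul_mgf (μ := Prob) (X := ∑ i ∈ range L, V i)
      ((L : ℝ) * ε) ht0 hSint
    rw [hVindep.mgf_sum hVm (range L), hsum_apply] at hchern
    have hprod : ∏ i ∈ range L, mgf (V i) Prob t ≤ Real.exp ((L:ℝ) * (t ^ 2 * b ^ 2 / 2)) := by
      calc ∏ i ∈ range L, mgf (V i) Prob t ≤ ∏ i ∈ range L, Real.exp (t ^ 2 * b ^ 2 / 2) :=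
            Finset.prod_le_prod (fun i _ => mgf_nonneg) (fun i _ => hmgf i)
        _ = Real.exp ((L:ℝ) * (t ^ 2 * b ^ 2 / 2)) := by
            rw [Finset.prod_const, ← Real.exp_nat_mul]
            simp
    have hLε : (L:ℝ) * ε ^ 2 = 2 * b ^ 2 * Real.log (2 / δ) := by
      rw [hεsq]; field_simp
    have harith : -t * ((L:ℝ) * ε) + (L:ℝ) * (t ^ 2 * b ^ 2 / 2) = -Real.log (2 / δ) := by
      have hb2 : (b:ℝ) ^ 2 ≠ 0 := by positivity
      have e1 : -t * ((L:ℝ) * ε) + (L:ℝ) * (t ^ 2 * b ^ 2 / 2)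
          = -(((L:ℝ) * ε ^ 2) / (2 * b ^ 2)) := by
        rw [ht_def]; field_simp; ring
      rw [e1, hLε]
      rw [neg_inj, mul_div_cancel_left₀ _ (by positivity : (2:ℝ) * b ^ 2 ≠ 0)]
    have hfinal : (Prob {ω | (L:ℝ) * ε ≤ ∑ i ∈ range L, V i ω}).toReal ≤ δ / 2 := by
      calc (Prob {ω | (L:ℝ) * ε ≤ ∑ i ∈ range L, V i ω}).toReal
          ≤ Real.exp (-t * ((L:ℝ) * ε)) * ∏ i ∈ range L, mgf (V i) Prob t := hchern
        _ ≤ Real.exp (-t * ((L:ℝ) * ε)) * Real.exp ((L:ℝ) * (t ^ 2 * b ^ 2 / 2)) := by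
            exact mul_le_mul_of_nonneg_left hprod (Real.exp_nonneg _)
        _ = Real.exp (-t * ((L:ℝ) * ε) + (L:ℝ) * (t ^ 2 * b ^ 2 / 2)) := (Real.exp_add _ _).symm
        _ = Real.exp (-Real.log (2 / δ)) := by rw [harith]
        _ = δ / 2 := by
            rw [Real.exp_neg, Real.exp_log (by positivity), inv_div]
    set Bset : Set Ω := {ω | (L:ℝ) * ε ≤ ∑ i ∈ range L, V i ω} with hBset_def
    have hBmeas : MeasurableSet Bset := measurableSet_le measurable_const hSm
    have hsub : ∀ᵐ ω ∂Prob, ω ∈ Bsetᶜ →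
        ω ∈ {ω | (∑ i ∈ range L, Z i ω * X i ω) / (∑ i ∈ range L, Z i ω) - μ < ε} := by
      filter_upwards [hG] with ω hω hmem
      simp only [hBset_def, Set.mem_compl_iff, Set.mem_setOf_eq, not_le] at hmem
      have hsumV : ∑ i ∈ range L, V i ω
          = (∑ i ∈ range L, Z i ω * X i ω) - (μ + ε) * (∑ i ∈ range L, Z i ω) + L * ε := by
        show ∑ i ∈ range L, (Z i ω * X i ω - (μ + ε) * Z i ω + ε)
          = (∑ i ∈ range L, Z i ω * X i ω) - (μ + ε) * (∑ i ∈ range L, Z i ω) + L * ε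
        rw [Finset.sum_add_distrib, Finset.sum_sub_distrib, ← Finset.mul_sum,
          Finset.sum_const, Finset.card_range, nsmul_eq_mul]
      rw [hsumV] at hmem
      have hlt : (∑ i ∈ range L, Z i ω * X i ω) < (μ + ε) * (∑ i ∈ range L, Z i ω) := by
        linarith
      have hZXnn : 0 ≤ ∑ i ∈ range L, Z i ω * X i ω := by
        apply Finset.sum_nonneg
        intro i hi
        rcases (hω i).1 with h2 | h2 <;> rw [h2]
        · simp
        · rw [mul_one]; exact (hω i).2.1
      have hSZpos : 0 < ∑ i ∈ range L, Z i ω := by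
        by_contra hc
        push_neg at hc
        have : (μ + ε) * (∑ i ∈ range L, Z i ω) ≤ 0 :=
          mul_nonpos_of_nonneg_of_nonpos (by linarith) hc
        linarith
      show (∑ i ∈ range L, Z i ω * X i ω) / (∑ i ∈ range L, Z i ω) - μ < ε
      rw [sub_lt_iff_lt_add, div_lt_iff₀ hSZpos]
      calc (∑ i ∈ range L, Z i ω * X i ω) < (μ + ε) * (∑ i ∈ range L, Z i ω) := hlt
        _ = (ε + μ) * (∑ i ∈ range L, Z i ω) := by ring
    have hmono : Prob Bsetᶜ ≤
        Prob {ω | (∑ i ∈ range L, Z i ω * X i ω) / (∑ i ∈ range L, Z i ω) - μ < ε} :=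
      measure_mono_ae hsub
    have hcompl : (Prob Bsetᶜ).toReal = 1 - (Prob Bset).toReal := by
      rw [prob_compl_eq_one_sub hBmeas,
        ENNReal.toReal_sub_of_le prob_le_one ENNReal.one_ne_top]
      simp
    calc 1 - δ < 1 - δ / 2 := by linarith
      _ ≤ 1 - (Prob Bset).toReal := by linarith [hfinal]
      _ = (Prob Bsetᶜ).toReal := hcompl.symm
      _ ≤ _ := ENNReal.toReal_mono (measure_ne_top _ _) hmono
  · -- trivial case : 1 < μ + ε
    have hae : ∀ᵐ ω ∂Prob,
        (∑ i ∈ range L, Z i ω * X i ω) / (∑ i ∈ range L, Z i ω) - μ < ε := by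
      filter_upwards [hG] with ω hω
      have hZXnn : ∀ i ∈ range L, 0 ≤ Z i ω * X i ω := by
        intro i hi
        rcases (hω i).1 with h2 | h2 <;> rw [h2]
        · simp
        · rw [mul_one]; exact (hω i).2.1
      have hSZnn : 0 ≤ ∑ i ∈ range L, Z i ω :=
        Finset.sum_nonneg fun i hi => (hω i).2.1
      show (∑ i ∈ range L, Z i ω * X i ω) / (∑ i ∈ range L, Z i ω) - μ < ε
      rcases hSZnn.eq_or_lt with h0 | h0
      · rw [← h0, div_zero]
        linarith
      · have hle : (∑ i ∈ range L, Z i ω * X i ω) ≤ ∑ i ∈ range L, Z i ω := by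
          apply Finset.sum_le_sum
          intro i hi
          rcases (hω i).1 with h2 | h2 <;> rw [h2]
          · simp [(hω i).2.1]
          · simp
        have := div_le_one_of_le₀ hle h0.le
        linarith
    have hTmeas : MeasurableSet {ω | (∑ i ∈ range L, Z i ω * X i ω) /
        (∑ i ∈ range L, Z i ω) - μ < ε} := by
      apply measurableSet_lt _ measurable_const
      exact ((Finset.measurable_sum (range L) fun i _ => (hZm i).mul (hXm i)).div
        (Finset.measurable_sum (range L) fun i _ => hZm i)).sub measurable_const
    have heq : Prob {ω | (∑ i ∈ range L, Z i ω * X i ω) / (∑ i ∈ range L, Z i ω) - μ < ε}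
        = 1 := by
      have h0 : Prob {ω | ¬ ((∑ i ∈ range L, Z i ω * X i ω) /
          (∑ i ∈ range L, Z i ω) - μ < ε)} = 0 := MeasureTheory.ae_iff.mp hae
      rw [← prob_compl_eq_zero_iff (μ := Prob) hTmeas, Set.compl_setOf]
      exact h0
    rw [heq]
    simp
    linarith
end

section
/- Under the stated assumptions with μ > 0, for any δ ∈ (0,1), with probability greater than 1 − δ, μ̂_L > ( 1 − √( 27 b log(2/δ) / (L μ) ) ) · μ. -/
open Finset MeasureTheory ProbabilityTheory

lemma exp_le_one_add_add_sq {x : ℝ} (hx : |x| ≤ 1) : Real.exp x ≤ 1 + x + x ^ 2 := by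
  have h := Real.exp_bound hx (by norm_num : (0:ℕ) < 2)
  rw [show ∑ m ∈ range 2, x ^ m / m.factorial = 1 + x by
    simp [Finset.sum_range_succ]] at h
  have h1 := (abs_sub_le_iff.1 h).1
  have h2 : |x| ^ 2 = x ^ 2 := sq_abs x
  have h3 : (((2:ℕ).succ : ℝ)) / (((2:ℕ).factorial : ℝ) * 2) = 3 / 4 := by
    norm_num [Nat.factorial]
  rw [h2] at h1
  nlinarith [sq_nonneg x]

lemma mgf_le_of_bounded {Ω : Type*} [MeasurableSpace Ω] (Prob : Measure Ω)
    [IsProbabilityMeasure Prob] {Y : Ω → ℝ} {b m : ℝ} (hb : 0 < b)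
    (hY : Measurable Y) (hae : ∀ᵐ ω ∂Prob, Y ω ∈ Set.Icc 0 b)
    (hm : ∫ ω, Y ω ∂Prob = m) {s : ℝ} (hs : |s| * b ≤ 1) :
    mgf Y Prob s ≤ Real.exp (s * m + s ^ 2 * b * m) := by
  have hYint : Integrable Y Prob := by
    refine Integrable.mono' (integrable_const b) hY.aestronglyMeasurable ?_
    filter_upwards [hae] with ω h
    rw [Real.norm_eq_abs, abs_of_nonneg h.1]; exact h.2
  have hY2int : Integrable (fun ω => Y ω ^ 2) Prob := by
    refine Integrable.mono' (integrable_const (b ^ 2))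
      (hY.pow_const 2).aestronglyMeasurable ?_
    filter_upwards [hae] with ω h
    rw [Real.norm_eq_abs, abs_of_nonneg (sq_nonneg _)]
    exact pow_le_pow_left₀ h.1 h.2 2
  have hY2 : ∫ ω, Y ω ^ 2 ∂Prob ≤ b * m := by
    have h : ∫ ω, Y ω ^ 2 ∂Prob ≤ ∫ ω, b * Y ω ∂Prob := by
      refine integral_mono_ae hY2int (hYint.const_mul b) ?_
      filter_upwards [hae] with ω h
      nlinarith [h.1, h.2]
    rwa [integral_const_mul, hm] at h
  have hpt : ∀ᵐ ω ∂Prob, Real.exp (s * Y ω) ≤ 1 + s * Y ω + s ^ 2 * Y ω ^ 2 := by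
    filter_upwards [hae] with ω h
    have habs : |s * Y ω| ≤ 1 := by
      rw [abs_mul, abs_of_nonneg h.1]
      calc |s| * Y ω ≤ |s| * b := by gcongr; exact h.2
        _ ≤ 1 := hs
    have h2 := exp_le_one_add_add_sq habs
    calc Real.exp (s * Y ω) ≤ 1 + s * Y ω + (s * Y ω) ^ 2 := h2
      _ = 1 + s * Y ω + s ^ 2 * Y ω ^ 2 := by ring
  have hexpint : Integrable (fun ω => Real.exp (s * Y ω)) Prob := by
    refine Integrable.mono' (integrable_const (Real.exp 1))
      ((hY.const_mul s).exp).aestronglyMeasurable ?_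
    filter_upwards [hae] with ω h
    rw [Real.norm_eq_abs, abs_of_pos (Real.exp_pos _), Real.exp_le_exp]
    have habs : |s * Y ω| ≤ 1 := by
      rw [abs_mul, abs_of_nonneg h.1]
      calc |s| * Y ω ≤ |s| * b := by gcongr; exact h.2
        _ ≤ 1 := hs
    exact le_trans (le_abs_self _) habs
  calc mgf Y Prob s = ∫ ω, Real.exp (s * Y ω) ∂Prob := rfl
    _ ≤ ∫ ω, (1 + s * Y ω + s ^ 2 * Y ω ^ 2) ∂Prob := by
        refine integral_mono_ae hexpint ?_ hpt
        exact ((integrable_const 1).add (hYint.const_mul s)).add (hY2int.const_mul (s ^ 2))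
    _ = 1 + s * m + s ^ 2 * ∫ ω, Y ω ^ 2 ∂Prob := by
        have i1 : Integrable (fun ω => 1 + s * Y ω) Prob :=
          (integrable_const 1).add (hYint.const_mul s)
        have i2 : Integrable (fun ω => s ^ 2 * Y ω ^ 2) Prob := hY2int.const_mul _
        rw [integral_add i1 i2, integral_add (integrable_const 1) (hYint.const_mul s),
          integral_const, integral_const_mul, integral_const_mul, hm]
        simp
    _ ≤ 1 + s * m + s ^ 2 * (b * m) := by
        nlinarith [sq_nonneg s, hY2, mul_le_mul_of_nonneg_left hY2 (sq_nonneg s)]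
    _ ≤ Real.exp (s * m + s ^ 2 * b * m) := by
        have h := Real.add_one_le_exp (s * m + s ^ 2 * b * m)
        nlinarith

lemma chernoff_mgf_sum {Ω : Type*} [MeasurableSpace Ω] (Prob : Measure Ω)
    [IsProbabilityMeasure Prob] (Y : ℕ → Ω → ℝ) (b m : ℝ) (hb : 0 < b)
    (hmeas : ∀ i, Measurable (Y i))
    (hindep : iIndepFun (m := fun _ : ℕ => (inferInstance : MeasurableSpace ℝ)) Y Prob)
    (hae : ∀ i, ∀ᵐ ω ∂Prob, Y i ω ∈ Set.Icc 0 b)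
    (hm : ∀ i, ∫ ω, Y i ω ∂Prob = m)
    (L : ℕ) {s : ℝ} (hs : |s| * b ≤ 1) :
    mgf (∑ i ∈ range L, Y i) Prob s ≤ Real.exp (L * (s * m + s ^ 2 * b * m)) := by
  rw [hindep.mgf_sum hmeas]
  calc ∏ i ∈ range L, mgf (Y i) Prob s
      ≤ ∏ _i ∈ range L, Real.exp (s * m + s ^ 2 * b * m) :=
        Finset.prod_le_prod (fun i _ => mgf_nonneg)
          (fun i _ => mgf_le_of_bounded Prob hb (hmeas i) (hae i) (hm i) hs)
    _ = Real.exp (L * (s * m + s ^ 2 * b * m)) := by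
        rw [Finset.prod_const, card_range, ← Real.exp_nat_mul]

lemma integrable_exp_sum_of_bounded {Ω : Type*} [MeasurableSpace Ω] (Prob : Measure Ω)
    [IsProbabilityMeasure Prob] (Y : ℕ → Ω → ℝ) (b : ℝ)
    (hmeas : ∀ i, Measurable (Y i))
    (hae : ∀ i, ∀ᵐ ω ∂Prob, Y i ω ∈ Set.Icc 0 b)
    (L : ℕ) (s : ℝ) :
    Integrable (fun ω => Real.exp (s * (∑ i ∈ range L, Y i) ω)) Prob := by
  have hsummeas : Measurable fun ω => ∑ i ∈ range L, Y i ω :=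
    Finset.measurable_sum _ fun i _ => hmeas i
  refine Integrable.mono' (integrable_const (Real.exp (|s| * (L * b)))) ?_ ?_
  · have : Measurable fun ω => Real.exp (s * ∑ i ∈ range L, Y i ω) :=
      (hsummeas.const_mul s).exp
    simpa [Finset.sum_apply] using this.aestronglyMeasurable
  · filter_upwards [MeasureTheory.ae_all_iff.2 hae] with ω h
    rw [Real.norm_eq_abs, abs_of_pos (Real.exp_pos _), Real.exp_le_exp]
    have h1 : |(∑ i ∈ range L, Y i) ω| ≤ L * b := by
      rw [Finset.sum_apply]
      calc |∑ i ∈ range L, Y i ω| ≤ ∑ i ∈ range L, |Y i ω| :=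
            Finset.abs_sum_le_sum_abs _ _
        _ ≤ ∑ _i ∈ range L, b := by
            refine Finset.sum_le_sum fun i _ => ?_
            rw [abs_of_nonneg (h i).1]; exact (h i).2
        _ = L * b := by simp [mul_comm]
    calc s * (∑ i ∈ range L, Y i) ω ≤ |s * (∑ i ∈ range L, Y i) ω| := le_abs_self _
      _ = |s| * |(∑ i ∈ range L, Y i) ω| := abs_mul _ _
      _ ≤ |s| * (L * b) := by gcongr

/-- Proposition 2, lower tail: relative concentration of the
self-normalized importance-sampling estimator.  For i.i.d. pairs `(Xᵢ, Zᵢ)`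
with `Xᵢ ∈ {0,1}`, `Zᵢ ∈ [0,b]`, `E[Zᵢ] = 1` and `E[ZᵢXᵢ] = μ > 0`, with
probability greater than `1 − δ`,
`μ̂_L > (1 − √(27 b log(2/δ) / (L μ))) μ`. -/
theorem selfNormalized_IS_relative_lower
    {Ω : Type*} [MeasurableSpace Ω] (Prob : Measure Ω) [IsProbabilityMeasure Prob]
    (X Z : ℕ → Ω → ℝ) (b μ : ℝ) (hb : 0 < b) (hμ : 0 < μ)
    (hmeas : ∀ i, Measurable fun ω => (X i ω, Z i ω))
    (hindep : iIndepFun (m := fun _ : ℕ => (inferInstance : MeasurableSpace (ℝ × ℝ)))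
      (fun i ω => (X i ω, Z i ω)) Prob)
    (hident : ∀ i, IdentDistrib (fun ω => (X i ω, Z i ω)) (fun ω => (X 0 ω, Z 0 ω)) Prob Prob)
    (hX : ∀ i, ∀ᵐ ω ∂Prob, X i ω = 0 ∨ X i ω = 1)
    (hZ : ∀ i, ∀ᵐ ω ∂Prob, Z i ω ∈ Set.Icc 0 b)
    (hEZ : ∀ i, ∫ ω, Z i ω ∂Prob = 1)
    (hEZX : ∀ i, ∫ ω, Z i ω * X i ω ∂Prob = μ)
    (L : ℕ) (hL : 0 < L) (δ : ℝ) (hδ : δ ∈ Set.Ioo (0 : ℝ) 1) :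
    1 - δ < (Prob {ω | (1 - Real.sqrt (27 * b * Real.log (2 / δ) / (L * μ))) * μ
        < (∑ i ∈ range L, Z i ω * X i ω) / (∑ i ∈ range L, Z i ω)}).toReal := by
  obtain ⟨hδ0, hδ1⟩ := hδ
  have hg : 0 < Real.log (2 / δ) := Real.log_pos (by rw [lt_div_iff₀ hδ0]; linarith)
  set g := Real.log (2 / δ) with hg_def
  set ε := Real.sqrt (27 * b * g / (L * μ)) with hε_def
  have hLpos : (0:ℝ) < L := by exact_mod_cast hL
  have harg : 0 < 27 * b * g / (L * μ) := by positivity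
  have hε0 : 0 < ε := Real.sqrt_pos.2 harg
  have hε2 : ε ^ 2 = 27 * b * g / (L * μ) := Real.sq_sqrt harg.le
  -- measurability
  have hXm : ∀ i, Measurable (X i) := fun i => (hmeas i).fst
  have hZm : ∀ i, Measurable (Z i) := fun i => (hmeas i).snd
  have hYm : ∀ i, Measurable (fun ω => Z i ω * X i ω) := fun i => (hZm i).mul (hXm i)
  -- a.e. bounds for Y = Z*X
  have hYae : ∀ i, ∀ᵐ ω ∂Prob, Z i ω * X i ω ∈ Set.Icc 0 b := by
    intro i
    filter_upwards [hX i, hZ i] with ω hx hz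
    rcases hx with h0 | h1
    · simp [h0, hb.le]
    · rw [h1, mul_one]; exact hz
  have hYleZ : ∀ i, ∀ᵐ ω ∂Prob, Z i ω * X i ω ≤ Z i ω := by
    intro i
    filter_upwards [hX i, hZ i] with ω hx hz
    rcases hx with h0 | h1
    · simpa [h0] using hz.1
    · simp [h1]
  -- integrability
  have hYint : ∀ i, Integrable (fun ω => Z i ω * X i ω) Prob := by
    intro i
    refine Integrable.mono' (integrable_const b) (hYm i).aestronglyMeasurable ?_
    filter_upwards [hYae i] with ω h
    rw [Real.norm_eq_abs, abs_of_nonneg h.1]; exact h.2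
  have hZint : ∀ i, Integrable (Z i) Prob := by
    intro i
    refine Integrable.mono' (integrable_const b) (hZm i).aestronglyMeasurable ?_
    filter_upwards [hZ i] with ω h
    rw [Real.norm_eq_abs, abs_of_nonneg h.1]; exact h.2
  have hμ1 : μ ≤ 1 := by
    rw [← hEZX 0, ← hEZ 0]
    exact integral_mono_ae (hYint 0) (hZint 0) (hYleZ 0)
  -- independence of the derived families
  have hYindep : iIndepFun (m := fun _ : ℕ => (inferInstance : MeasurableSpace ℝ))
      (fun i ω => Z i ω * X i ω) Prob := by
    have h := hindep.comp (fun _ (p : ℝ × ℝ) => p.2 * p.1)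
      (fun _ => measurable_snd.mul measurable_fst)
    exact h
  have hZindep : iIndepFun (m := fun _ : ℕ => (inferInstance : MeasurableSpace ℝ)) Z Prob := by
    have h := hindep.comp (fun _ (p : ℝ × ℝ) => p.2) (fun _ => measurable_snd)
    exact h
  -- the target event
  have hEmeas : MeasurableSet {ω | (1 - ε) * μ
      < (∑ i ∈ range L, Z i ω * X i ω) / (∑ i ∈ range L, Z i ω)} := by
    refine measurableSet_lt measurable_const ?_
    exact (Finset.measurable_sum _ fun i _ => hYm i).div
      (Finset.measurable_sum _ fun i _ => hZm i)
  by_cases hεle : ε ≤ 1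
  · -- main case
    set a := ε / 2 with ha_def
    set c := Real.sqrt μ * ε / 2 with hc_def
    have hsμ : Real.sqrt μ ≤ 1 := Real.sqrt_le_one.2 hμ1
    have hsμ0 : 0 ≤ Real.sqrt μ := Real.sqrt_nonneg μ
    have hc0 : 0 ≤ c := by positivity
    have ha0 : 0 < a := by positivity
    have ha1 : a ≤ 1 / 2 := by rw [ha_def]; linarith
    have hcε : c ≤ ε / 2 := by
      rw [hc_def]
      have := mul_le_of_le_one_left hε0.le hsμ
      linarith
    have hc2 : c ^ 2 = μ * ε ^ 2 / 4 := by
      rw [hc_def]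
      rw [div_pow, mul_pow, Real.sq_sqrt hμ.le]
      ring
    have hδ2 : Real.exp (-(27 / 16 * g)) < δ / 2 := by
      have h1 : Real.exp (-(27 / 16 * g)) < Real.exp (-g) :=
        Real.exp_lt_exp.2 (by linarith)
      have h2 : Real.exp (-g) = δ / 2 := by
        rw [hg_def, Real.exp_neg, Real.exp_log (by positivity : (0:ℝ) < 2 / δ)]
        rw [inv_div]
      linarith
    -- lower tail for S = ∑ Z X
    have hA : (Prob {ω | (∑ i ∈ range L, fun ω => Z i ω * X i ω) ω
        ≤ (1 - a) * (L * μ)}).toReal < δ / 2 := by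
      set s : ℝ := -(a / (2 * b)) with hs_def
      have hsle : s ≤ 0 := by rw [hs_def, neg_nonpos]; positivity
      have habs : |s| * b ≤ 1 := by
        rw [hs_def, abs_neg, abs_of_nonneg (by positivity : (0:ℝ) ≤ a / (2 * b))]
        have heq : a / (2 * b) * b = a / 2 := by field_simp
        rw [heq]
        linarith
      have hint := integrable_exp_sum_of_bounded Prob _ b hYm hYae L s
      have h1 := measure_le_le_exp_mul_mgf (μ := Prob)
        (X := ∑ i ∈ range L, fun ω => Z i ω * X i ω) ((1 - a) * (L * μ)) hsle hint
      have h2 := chernoff_mgf_sum Prob _ b μ hb hYm hYindep hYae hEZX L habs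
      have h3 : Real.exp (-s * ((1 - a) * (L * μ)))
          * Real.exp ((L : ℝ) * (s * μ + s ^ 2 * b * μ))
          = Real.exp (-(a ^ 2 * (L * μ)) / (4 * b)) := by
        rw [← Real.exp_add]
        congr 1
        rw [hs_def]
        field_simp
        ring
      have h4 : -(a ^ 2 * (L * μ)) / (4 * b) = -(27 / 16 * g) := by
        rw [ha_def]
        have : (ε / 2) ^ 2 = ε ^ 2 / 4 := by ring
        rw [this, hε2]
        field_simp
        ring
      calc (Prob _).toReal ≤ _ := h1
        _ ≤ Real.exp (-s * ((1 - a) * (L * μ)))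
            * Real.exp ((L : ℝ) * (s * μ + s ^ 2 * b * μ)) :=
            mul_le_mul_of_nonneg_left h2 (Real.exp_pos _).le
        _ = Real.exp (-(27 / 16 * g)) := by rw [h3, h4]
        _ < δ / 2 := hδ2
    -- upper tail for T = ∑ Z
    have hB : (Prob {ω | (1 + c) * L ≤ (∑ i ∈ range L, Z i) ω}).toReal < δ / 2 := by
      set s : ℝ := c / (2 * b) with hs_def
      have hsge : 0 ≤ s := by positivity
      have habs : |s| * b ≤ 1 := by
        rw [abs_of_nonneg hsge, hs_def]
        have heq : c / (2 * b) * b = c / 2 := by field_simp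
        rw [heq]
        linarith
      have hint := integrable_exp_sum_of_bounded Prob _ b hZm hZ L s
      have h1 := measure_ge_le_exp_mul_mgf (μ := Prob)
        (X := ∑ i ∈ range L, Z i) ((1 + c) * L) hsge hint
      have h2 := chernoff_mgf_sum Prob _ b 1 hb hZm hZindep hZ hEZ L habs
      have h3 : Real.exp (-s * ((1 + c) * L))
          * Real.exp ((L : ℝ) * (s * 1 + s ^ 2 * b * 1))
          = Real.exp (-(c ^ 2 * L) / (4 * b)) := by
        rw [← Real.exp_add]
        congr 1
        rw [hs_def]
        field_simp
        ring
      have h4 : -(c ^ 2 * L) / (4 * b) = -(27 / 16 * g) := by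
        rw [hc2, hε2]
        field_simp
        ring
      calc (Prob _).toReal ≤ _ := h1
        _ ≤ Real.exp (-s * ((1 + c) * L))
            * Real.exp ((L : ℝ) * (s * 1 + s ^ 2 * b * 1)) :=
            mul_le_mul_of_nonneg_left h2 (Real.exp_pos _).le
        _ = Real.exp (-(27 / 16 * g)) := by rw [h3, h4]
        _ < δ / 2 := hδ2
    -- inclusion of the complement
    set E := {ω | (1 - ε) * μ
        < (∑ i ∈ range L, Z i ω * X i ω) / (∑ i ∈ range L, Z i ω)} with hE_def
    set A := {ω | (∑ i ∈ range L, fun ω => Z i ω * X i ω) ω ≤ (1 - a) * (L * μ)} with hA_def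
    set B := {ω | (1 + c) * L ≤ (∑ i ∈ range L, Z i) ω} with hB_def
    set P : Ω → Prop := fun ω => (∀ i, Z i ω * X i ω ∈ Set.Icc 0 b)
        ∧ (∀ i, Z i ω * X i ω ≤ Z i ω) with hP_def
    have hptae : ∀ᵐ ω ∂Prob, P ω :=
      (MeasureTheory.ae_all_iff.2 hYae).and (MeasureTheory.ae_all_iff.2 hYleZ)
    have hNnull : Prob {ω | ¬ P ω} = 0 := by
      simpa using MeasureTheory.ae_iff.1 hptae
    have hsub : Eᶜ ⊆ (A ∪ B) ∪ {ω | ¬ P ω} := by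
      intro ω hmem
      by_cases hP : P ω
      swap
      · exact Or.inr hP
      by_cases hA' : ω ∈ A
      · exact Or.inl (Or.inl hA')
      by_cases hB' : ω ∈ B
      · exact Or.inl (Or.inr hB')
      exfalso
      apply hmem
      rw [hA_def, Set.mem_setOf_eq, Finset.sum_apply] at hA'
      rw [hB_def, Set.mem_setOf_eq, Finset.sum_apply] at hB'
      push_neg at hA' hB'
      rw [hE_def, Set.mem_setOf_eq]
      set S := ∑ i ∈ range L, Z i ω * X i ω with hS_def
      set T := ∑ i ∈ range L, Z i ω with hT_def
      have hA'' : (1 - a) * (L * μ) < S := by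
        refine lt_of_lt_of_le hA' (le_of_eq ?_)
        rw [hS_def]
      have hSpos : 0 < S := by
        refine lt_trans ?_ hA''
        have h1a : (0:ℝ) < 1 - a := by linarith
        positivity
      have hST : S ≤ T := Finset.sum_le_sum fun i _ => (hP.2 i)
      have hTpos : 0 < T := lt_of_lt_of_le hSpos hST
      have hden : (0:ℝ) < (1 + c) * L := by positivity
      have key : (1 - ε) * μ ≤ (1 - a) * (L * μ) / ((1 + c) * L) := by
        rw [le_div_iff₀ hden]
        have hεc : 0 ≤ ε * c := mul_nonneg hε0.le hc0
        have hacε : a + c ≤ ε := by rw [ha_def]; linarith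
        have h6 : 0 ≤ ε + ε * c - (a + c) := by linarith
        have h7 : 0 ≤ (L : ℝ) * μ * (ε + ε * c - (a + c)) :=
          mul_nonneg (mul_nonneg hLpos.le hμ.le) h6
        have h8 : (1 - a) * ((L : ℝ) * μ) - (1 - ε) * μ * ((1 + c) * (L : ℝ))
            = (L : ℝ) * μ * (ε + ε * c - (a + c)) := by ring
        linarith
      calc (1 - ε) * μ ≤ (1 - a) * (L * μ) / ((1 + c) * L) := key
        _ < S / ((1 + c) * L) := by gcongr
        _ ≤ S / T := by
            apply div_le_div_of_nonneg_left hSpos.le hTpos hB'.le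
    have hcompl : (Prob Eᶜ).toReal < δ := by
      have hle : Prob Eᶜ ≤ Prob A + Prob B := by
        calc Prob Eᶜ ≤ Prob ((A ∪ B) ∪ {ω | ¬ P ω}) := measure_mono hsub
          _ ≤ Prob (A ∪ B) + Prob {ω | ¬ P ω} := measure_union_le _ _
          _ = Prob (A ∪ B) := by rw [hNnull, add_zero]
          _ ≤ Prob A + Prob B := measure_union_le _ _
      have hAne : Prob A ≠ ⊤ := measure_ne_top _ _
      have hBne : Prob B ≠ ⊤ := measure_ne_top _ _
      have h2 := ENNReal.toReal_mono (by finiteness) hle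
      rw [ENNReal.toReal_add hAne hBne] at h2
      linarith
    have hsum1 : (Prob E).toReal + (Prob Eᶜ).toReal = 1 := by
      rw [← ENNReal.toReal_add (measure_ne_top _ _) (measure_ne_top _ _),
        prob_add_prob_compl hEmeas]
      simp
    linarith
  · -- trivial case : ε > 1
    push_neg at hεle
    have hneg : (1 - ε) * μ < 0 := by nlinarith
    have hae0 : ∀ᵐ ω ∂Prob, (1 - ε) * μ
        < (∑ i ∈ range L, Z i ω * X i ω) / (∑ i ∈ range L, Z i ω) := by
      filter_upwards [MeasureTheory.ae_all_iff.2 hYae, MeasureTheory.ae_all_iff.2 hZ]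
        with ω h1 h2
      refine lt_of_lt_of_le hneg (div_nonneg ?_ ?_)
      · exact Finset.sum_nonneg fun i _ => (h1 i).1
      · exact Finset.sum_nonneg fun i _ => (h2 i).1
    have h1 : Prob {ω | (1 - ε) * μ
        < (∑ i ∈ range L, Z i ω * X i ω) / (∑ i ∈ range L, Z i ω)} = 1 := by
      rw [← measure_univ (μ := Prob)]
      exact measure_congr (Filter.eventuallyEq_univ.2 hae0)
    rw [h1, ENNReal.toReal_one]
    linarith
end

section
/- Let y = (y_1,…,y_N) ∈ S^N have distinct entries, and assume π_{y_t} > 0 for all t and A_{y_s, y_t} > 0 for all s ≠ t. For a permutation τ ∈ Ψ_N, define the causal sampling probability R[τ] = ( π_{y_{τ_1}} / ∑_{t=1}^N π_{y_t} ) · ∏_{i=2}^N ( A_{y_{τ_{i−1}}, y_{τ_i}} / ∑_{t ∉ {τ_1,…,τ_{i−1}}} A_{y_{τ_{i−1}}, y_t} ). Then: (i) R is a probability distribution on Ψ_N, i.e., ∑_{τ∈Ψ_N} R[τ] = 1; and (ii) for every τ ∈ Ψ_N, the ordered-path likelihood factors as P[y|τ,A,π] = ( ∑_{t=1}^N π_{y_t}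 ) · R[τ] · z(τ), where z(τ) = ∏_{i=2}^N ∑_{t ∉ {τ_1,…,τ_{i−1}}} A_{y_{τ_{i−1}}, y_t}; in particular the importance weight P[τ|y,A,π]/R[τ] is proportional (over τ ∈ Ψ_N) to z(τ). -/
open Finset

namespace NICO

variable {S : Type*} [Fintype S]

set_option linter.unusedSectionVars false


private lemma key (A : S → S → ℝ) {N : ℕ} (y : Fin N → S)
    (hApos : ∀ s t : Fin N, s ≠ t → 0 < A (y s) (y t)) :
    ∀ m k : ℕ, k + m = N → 1 ≤ k → ∀ g : Fin N → Fin N,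
      (∀ a b : Fin N, a.val < k → b.val < k → g a = g b → a = b) →
      ∑ τ ∈ univ.filter (fun τ : Equiv.Perm (Fin N) => ∀ i : Fin N, i.val < k → τ i = g i),
        ∏ i ∈ univ.filter (fun i : Fin N => k ≤ i.val),
          (A (y (τ ⟨i.val - 1, Nat.lt_of_le_of_lt (Nat.sub_le i.val 1) i.isLt⟩)) (y (τ i)) /
            ∑ t ∈ univ.filter (fun t : Fin N => ∀ j : Fin N, j.val < i.val → τ j ≠ t),
              A (y (τ ⟨i.val - 1, Nat.lt_of_le_of_lt (Nat.sub_le i.val 1) i.isLt⟩)) (y t)) = 1 := by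
  intro m
  induction m with
  | zero =>
    intro k hkN hk1 g hg
    have hkN' : k = N := by omega
    subst hkN'
    have h1 : (univ.filter (fun i : Fin k => k ≤ i.val)) = (∅ : Finset (Fin k)) := by
      apply Finset.filter_eq_empty_iff.mpr
      intro i _
      omega
    have hginj : Function.Injective g := fun a b h => hg a b a.isLt b.isLt h
    have hgb := Finite.injective_iff_bijective.mp hginj
    have h2 : (univ.filter (fun τ : Equiv.Perm (Fin k) => ∀ i : Fin k, i.val < k → τ i = g i))
        = {Equiv.ofBijective g hgb} := by
      ext τ
      simp only [Finset.mem_filter, Finset.mem_univ, true_and, Finset.mem_singleton]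
      constructor
      · intro h
        ext i
        exact congrArg Fin.val (h i i.isLt)
      · intro h i _
        subst h
        rfl
    rw [h1, h2]
    simp
  | succ m ih =>
    intro k hkN hk1 g hg
    have hk : k < N := by omega
    set zk : Fin N := ⟨k, hk⟩ with hzk
    set zk1 : Fin N := ⟨k - 1, by omega⟩ with hzk1
    set G : Finset (Fin N) := univ.filter (fun v : Fin N => ∀ j : Fin N, j.val < k → g j ≠ v)
      with hG
    -- cardinality: G is nonempty
    have hGcard : G.Nonempty := by
      have hPcard : (univ.filter (fun i : Fin N => i.val < k)).card ≤ k := by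
        have := Finset.card_le_card_of_injOn (s := univ.filter (fun i : Fin N => i.val < k))
          (t := Finset.range k) (fun i => i.val)
          (by intro a ha; simp only [Finset.mem_coe, Finset.mem_filter] at ha; simp [ha.2])
          (fun a _ b _ h => Fin.ext h)
        simpa using this
      have hGeq : G = univ \ ((univ.filter (fun i : Fin N => i.val < k)).image g) := by
        ext u
        simp only [hG, Finset.mem_filter, Finset.mem_univ, true_and, Finset.mem_sdiff,
          Finset.mem_image]
        constructor
        · intro h hex
          obtain ⟨x, hx, hgx⟩ := hex
          exact h x hx hgx
        · intro h j hj hgj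
          exact h ⟨j, hj, hgj⟩
      rw [← Finset.card_pos, hGeq, Finset.card_sdiff_of_subset (by intro x _; simp)]
      have : ((univ.filter (fun i : Fin N => i.val < k)).image g).card ≤ k :=
        le_trans (Finset.card_image_le) hPcard
      have hcu : (univ : Finset (Fin N)).card = N := by simp
      omega
    -- the denominator for step k
    set D : ℝ := ∑ t ∈ G, A (y (g zk1)) (y t) with hD
    have hzk1lt : (zk1 : Fin N).val < k := by simp [hzk1]; omega
    have hnumpos : ∀ v ∈ G, 0 < A (y (g zk1)) (y v) := by
      intro v hv
      simp only [hG, Finset.mem_filter] at hv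
      exact hApos _ _ (hv.2 zk1 hzk1lt)
    have hDpos : 0 < D := Finset.sum_pos hnumpos hGcard
    -- split off the i = zk factor of the product
    have hzkmem : zk ∈ univ.filter (fun i : Fin N => k ≤ i.val) := by simp [hzk]
    have herase : (univ.filter (fun i : Fin N => k ≤ i.val)).erase zk
        = univ.filter (fun i : Fin N => k + 1 ≤ i.val) := by
      ext i
      simp only [Finset.mem_erase, Finset.mem_filter, Finset.mem_univ, true_and, ne_eq,
        Fin.ext_iff, hzk]
      omega
    -- fiber decomposition over v = τ zk
    rw [← Finset.sum_fiberwise (univ.filter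
        (fun τ : Equiv.Perm (Fin N) => ∀ i : Fin N, i.val < k → τ i = g i))
        (fun τ => τ zk)]
    -- sum over v outside G vanishes
    rw [← Finset.sum_subset (Finset.subset_univ G) ?h0]
    case h0 =>
      intro v _ hv
      have : (Finset.filter (fun τ => τ zk = v)
          (univ.filter (fun τ : Equiv.Perm (Fin N) => ∀ i : Fin N, i.val < k → τ i = g i)))
          = ∅ := by
        apply Finset.eq_empty_of_forall_notMem
        intro τ hτ
        simp only [Finset.mem_filter, Finset.mem_univ, true_and] at hτ
        simp only [hG, Finset.mem_filter, Finset.mem_univ, true_and, not_forall] at hv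
        obtain ⟨j, hj, hgj⟩ := hv
        push_neg at hgj
        have h1 : τ j = τ zk := by rw [hτ.1 j hj, hτ.2, hgj]
        have := τ.injective h1
        simp only [Fin.ext_iff, hzk] at this
        omega
      rw [this, Finset.sum_empty]
    -- each fiber contributes  A(y g zk1)(y v)/D
    have hfiber : ∀ v ∈ G, (∑ τ ∈ Finset.filter (fun τ => τ zk = v)
        (univ.filter (fun τ : Equiv.Perm (Fin N) => ∀ i : Fin N, i.val < k → τ i = g i)),
        ∏ i ∈ univ.filter (fun i : Fin N => k ≤ i.val),
          (A (y (τ ⟨i.val - 1, Nat.lt_of_le_of_lt (Nat.sub_le i.val 1) i.isLt⟩)) (y (τ i)) /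
            ∑ t ∈ univ.filter (fun t : Fin N => ∀ j : Fin N, j.val < i.val → τ j ≠ t),
              A (y (τ ⟨i.val - 1, Nat.lt_of_le_of_lt (Nat.sub_le i.val 1) i.isLt⟩)) (y t)))
        = A (y (g zk1)) (y v) / D := by
      intro v hv
      simp only [hG, Finset.mem_filter, Finset.mem_univ, true_and] at hv
      set g' : Fin N → Fin N := Function.update g zk v with hg'
      have hg'lt : ∀ i : Fin N, i.val < k → g' i = g i := by
        intro i hi
        apply Function.update_of_ne
        simp only [ne_eq, Fin.ext_iff, hzk]
        omega
      have hg'zk : g' zk = v := Function.update_self _ _ _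
      -- identify the fiber with the (k+1)-prefix set
      have hfib : (Finset.filter (fun τ => τ zk = v)
          (univ.filter (fun τ : Equiv.Perm (Fin N) => ∀ i : Fin N, i.val < k → τ i = g i)))
          = univ.filter (fun τ : Equiv.Perm (Fin N) => ∀ i : Fin N, i.val < k + 1 → τ i = g' i) := by
        ext τ
        simp only [Finset.mem_filter, Finset.mem_univ, true_and]
        constructor
        · rintro ⟨h1, h2⟩ i hi
          by_cases hik : i.val < k
          · rw [h1 i hik, hg'lt i hik]
          · have : i = zk := by
              simp only [Fin.ext_iff, hzk]; omega
            rw [this, h2, hg'zk]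
        · intro h
          refine ⟨fun i hi => by rw [h i (by omega), hg'lt i hi], ?_⟩
          rw [h zk (by simp [hzk]), hg'zk]
      rw [hfib]
      -- on this set, split the product and compute the first factor
      have hsplit : ∀ τ ∈ univ.filter
          (fun τ : Equiv.Perm (Fin N) => ∀ i : Fin N, i.val < k + 1 → τ i = g' i),
          (∏ i ∈ univ.filter (fun i : Fin N => k ≤ i.val),
            (A (y (τ ⟨i.val - 1, Nat.lt_of_le_of_lt (Nat.sub_le i.val 1) i.isLt⟩)) (y (τ i)) /
              ∑ t ∈ univ.filter (fun t : Fin N => ∀ j : Fin N, j.val < i.val → τ j ≠ t),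
                A (y (τ ⟨i.val - 1, Nat.lt_of_le_of_lt (Nat.sub_le i.val 1) i.isLt⟩)) (y t)))
          = (A (y (g zk1)) (y v) / D) *
            ∏ i ∈ univ.filter (fun i : Fin N => k + 1 ≤ i.val),
              (A (y (τ ⟨i.val - 1, Nat.lt_of_le_of_lt (Nat.sub_le i.val 1) i.isLt⟩)) (y (τ i)) /
                ∑ t ∈ univ.filter (fun t : Fin N => ∀ j : Fin N, j.val < i.val → τ j ≠ t),
                  A (y (τ ⟨i.val - 1, Nat.lt_of_le_of_lt (Nat.sub_le i.val 1) i.isLt⟩)) (y t)) := by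
        intro τ hτ
        simp only [Finset.mem_filter, Finset.mem_univ, true_and] at hτ
        rw [← Finset.mul_prod_erase _ _ hzkmem, herase]
        congr 1
        have hτzk1 : τ zk1 = g zk1 := by
          rw [hτ zk1 (by omega), hg'lt zk1 hzk1lt]
        have hτzk : τ zk = v := by rw [hτ zk (by simp [hzk]), hg'zk]
        have hidx : (⟨(zk : Fin N).val - 1,
            Nat.lt_of_le_of_lt (Nat.sub_le (zk : Fin N).val 1) (zk : Fin N).isLt⟩ : Fin N)
            = zk1 := by
          simp [Fin.ext_iff, hzk, hzk1]
        have hden : (univ.filter (fun t : Fin N => ∀ j : Fin N, j.val < (zk : Fin N).val → τ j ≠ t))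
            = G := by
          ext t
          simp only [hG, Finset.mem_filter, Finset.mem_univ, true_and, hzk]
          constructor
          · intro h j hj
            have h' := h j hj
            rwa [hτ j (by omega), hg'lt j hj] at h'
          · intro h j hj
            rw [hτ j (by omega), hg'lt j hj]
            exact h j hj
        rw [hidx, hden, hτzk1, hτzk, hD]
      rw [Finset.sum_congr rfl hsplit, ← Finset.mul_sum]
      have hIH := ih (k + 1) (by omega) (by omega) g' ?hginj
      case hginj =>
        intro a b ha hb hab
        by_cases hak : a.val < k <;> by_cases hbk : b.val < k
        · exact hg a b hak hbk (by rwa [hg'lt a hak, hg'lt b hbk] at hab)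
        · exfalso
          have hbzk : b = zk := by simp only [Fin.ext_iff, hzk]; omega
          rw [hg'lt a hak, hbzk, hg'zk] at hab
          exact hv a hak hab
        · exfalso
          have hazk : a = zk := by simp only [Fin.ext_iff, hzk]; omega
          rw [hg'lt b hbk, hazk, hg'zk] at hab
          exact hv b hbk hab.symm
        · have : a = zk := by simp only [Fin.ext_iff, hzk]; omega
          have hb' : b = zk := by simp only [Fin.ext_iff, hzk]; omega
          rw [this, hb']
      rw [hIH, mul_one]
    rw [Finset.sum_congr rfl hfiber, ← Finset.sum_div, ← hD, div_self (ne_of_gt hDpos)]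


/-- The causal importance-sampling distribution on permutations:
`R[τ] = (π_{y_{τ₁}} / ∑_t π_{y_t}) ∏_{i=2}^N (A_{y_{τ_{i−1}},y_{τ_i}} /
∑_{t ∉ {τ₁,…,τ_{i−1}}} A_{y_{τ_{i−1}},y_t})`. -/
noncomputable def causalR (A : S → S → ℝ) (π : S → ℝ) {N : ℕ} (hN : 0 < N)
    (y : Fin N → S) (τ : Equiv.Perm (Fin N)) : ℝ :=
  (π (y (τ ⟨0, hN⟩)) / ∑ t : Fin N, π (y t)) *
    ∏ i ∈ Finset.univ.filter (fun i : Fin N => 0 < i.val),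
      (A (y (τ ⟨i.val - 1, Nat.lt_of_le_of_lt (Nat.sub_le i.val 1) i.isLt⟩)) (y (τ i)) /
        ∑ t ∈ Finset.univ.filter (fun t : Fin N => ∀ j : Fin N, j.val < i.val → τ j ≠ t),
          A (y (τ ⟨i.val - 1, Nat.lt_of_le_of_lt (Nat.sub_le i.val 1) i.isLt⟩)) (y t))

/-- The causal importance weight
`z(τ) = ∏_{i=2}^N ∑_{t ∉ {τ₁,…,τ_{i−1}}} A_{y_{τ_{i−1}},y_t}`. -/
noncomputable def causalZ (A : S → S → ℝ) {N : ℕ} (y : Fin N → S)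
    (τ : Equiv.Perm (Fin N)) : ℝ :=
  ∏ i ∈ Finset.univ.filter (fun i : Fin N => 0 < i.val),
    ∑ t ∈ Finset.univ.filter (fun t : Fin N => ∀ j : Fin N, j.val < i.val → τ j ≠ t),
      A (y (τ ⟨i.val - 1, Nat.lt_of_le_of_lt (Nat.sub_le i.val 1) i.isLt⟩)) (y t)

/-- the causal sampling scheme.  (i) `R` is a probability
distribution on permutations; (ii) the ordered-path likelihood factors as
`P[y|τ,A,π] = (∑_t π_{y_t}) · R[τ] · z(τ)`, so the importance weight is
proportional to `z(τ)`. -/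
theorem causal_sampler
    (A : S → S → ℝ) (π : S → ℝ)
    (hA : (∀ i j, 0 ≤ A i j) ∧ ∀ i, ∑ j, A i j = 1)
    (hπ : (∀ i, 0 ≤ π i) ∧ ∑ i, π i = 1)
    {N : ℕ} (hN : 0 < N) (y : Fin N → S) (hy : Function.Injective y)
    (hπpos : ∀ t : Fin N, 0 < π (y t))
    (hApos : ∀ s t : Fin N, s ≠ t → 0 < A (y s) (y t)) :
    (∑ τ : Equiv.Perm (Fin N), causalR A π hN y τ) = 1 ∧
    ∀ τ : Equiv.Perm (Fin N),
      lik A π y τ = (∑ t : Fin N, π (y t)) * causalR A π hN y τ * causalZ A y τ := by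
  have hπsum : 0 < ∑ t : Fin N, π (y t) :=
    Finset.sum_pos (fun t _ => hπpos t) ⟨⟨0, hN⟩, Finset.mem_univ _⟩
  have hfilt : (univ.filter (fun i : Fin N => 0 < i.val))
      = univ.filter (fun i : Fin N => 1 ≤ i.val) := by
    apply Finset.filter_congr
    intro i _
    omega
  constructor
  · -- part (i): R is a probability distribution
    rw [← Finset.sum_fiberwise univ (fun τ : Equiv.Perm (Fin N) => τ ⟨0, hN⟩)
      (causalR A π hN y)]
    have hv : ∀ v : Fin N,
        (∑ τ ∈ univ.filter (fun τ : Equiv.Perm (Fin N) => τ ⟨0, hN⟩ = v),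
          causalR A π hN y τ) = π (y v) / ∑ t : Fin N, π (y t) := by
      intro v
      have hkey := key A y hApos (N - 1) 1 (by omega) le_rfl (fun _ => v)
        (fun a b ha hb _ => Fin.ext (by omega))
      have hset : (univ.filter
          (fun τ : Equiv.Perm (Fin N) => ∀ i : Fin N, i.val < 1 → τ i = (fun _ : Fin N => v) i))
          = univ.filter (fun τ : Equiv.Perm (Fin N) => τ ⟨0, hN⟩ = v) := by
        ext τ
        simp only [Finset.mem_filter, Finset.mem_univ, true_and]
        constructor
        · intro h
          exact h ⟨0, hN⟩ (by simp)
        · intro h i hi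
          have : i = ⟨0, hN⟩ := Fin.ext (show i.val = 0 by omega)
          rw [this]
          exact h
      rw [hset] at hkey
      have hR : ∀ τ ∈ univ.filter (fun τ : Equiv.Perm (Fin N) => τ ⟨0, hN⟩ = v),
          causalR A π hN y τ = (π (y v) / ∑ t : Fin N, π (y t)) *
            ∏ i ∈ univ.filter (fun i : Fin N => 1 ≤ i.val),
              (A (y (τ ⟨i.val - 1, Nat.lt_of_le_of_lt (Nat.sub_le i.val 1) i.isLt⟩)) (y (τ i)) /
                ∑ t ∈ univ.filter (fun t : Fin N => ∀ j : Fin N, j.val < i.val → τ j ≠ t),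
                  A (y (τ ⟨i.val - 1, Nat.lt_of_le_of_lt (Nat.sub_le i.val 1) i.isLt⟩)) (y t)) := by
        intro τ hτ
        simp only [Finset.mem_filter, Finset.mem_univ, true_and] at hτ
        rw [causalR, hτ, hfilt]
      rw [Finset.sum_congr rfl hR, ← Finset.mul_sum, hkey, mul_one]
    rw [Finset.sum_congr rfl (fun v _ => hv v), ← Finset.sum_div,
      div_self (ne_of_gt hπsum)]
  · -- part (ii): the likelihood factorisation
    intro τ
    have hz0 : (⟨0, hN⟩ : Fin N) ∈ (univ : Finset (Fin N)) := Finset.mem_univ _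
    have herase : (univ : Finset (Fin N)).erase ⟨0, hN⟩
        = univ.filter (fun i : Fin N => 0 < i.val) := by
      ext i
      simp only [Finset.mem_erase, Finset.mem_univ, and_true, true_and, ne_eq,
        Fin.ext_iff, Finset.mem_filter]
      omega
    have hDpos : ∀ i ∈ univ.filter (fun i : Fin N => 0 < i.val),
        0 < ∑ t ∈ univ.filter (fun t : Fin N => ∀ j : Fin N, j.val < i.val → τ j ≠ t),
          A (y (τ ⟨i.val - 1, Nat.lt_of_le_of_lt (Nat.sub_le i.val 1) i.isLt⟩)) (y t) := by
      intro i hi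
      simp only [Finset.mem_filter, Finset.mem_univ, true_and] at hi
      apply Finset.sum_pos
      · intro t ht
        simp only [Finset.mem_filter, Finset.mem_univ, true_and] at ht
        apply hApos
        intro hcon
        exact ht ⟨i.val - 1, Nat.lt_of_le_of_lt (Nat.sub_le i.val 1) i.isLt⟩
          (show i.val - 1 < i.val by omega) hcon
      · refine ⟨τ i, ?_⟩
        simp only [Finset.mem_filter, Finset.mem_univ, true_and]
        intro j hj hcon
        have := τ.injective hcon
        omega
    have hlik : lik A π y τ = π (y (τ ⟨0, hN⟩)) *
        ∏ i ∈ univ.filter (fun i : Fin N => 0 < i.val),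
          A (y (τ ⟨i.val - 1, Nat.lt_of_le_of_lt (Nat.sub_le i.val 1) i.isLt⟩)) (y (τ i)) := by
      rw [lik, ← Finset.mul_prod_erase univ _ hz0, herase]
      congr 1
      apply Finset.prod_congr rfl
      intro i hi
      simp only [Finset.mem_filter, Finset.mem_univ, true_and] at hi
      rw [if_neg (by omega)]
    have halg : ∀ X Y : ℝ,
        (∑ t : Fin N, π (y t)) * (π (y (τ ⟨0, hN⟩)) / (∑ t : Fin N, π (y t)) * X) * Y
          = π (y (τ ⟨0, hN⟩)) * (X * Y) := by
      intro X Y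
      field_simp
    rw [hlik, causalR, causalZ, halg, ← Finset.prod_mul_distrib]
    congr 1
    apply Finset.prod_congr rfl
    intro i hi
    exact (div_mul_cancel₀ _ (ne_of_gt (hDpos i hi))).symm

end NICO
end
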